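/- arXiv:2509.08684 — 8 statements merged into one kernel-verified Lean document; each statement's English description precedes it below -/
import Mathlib

section
/- For every balanced binary word w, at least one of w0 and w1 is balanced. -/
def IsBalanced (w : List Bool) : Prop :=
  ∀ u v : List Bool, u <:+: w → v <:+: w → u.length = v.length →
    |(u.count true : ℤ) - (v.count true : ℤ)| ≤ 1

private lemma suffix_of_suffix_len {s t w : List Bool} (hs : s <:+ w) (ht : t <:+ w)
    (h : s.length ≤ t.length) : s <:+ t := by
  rw [← List.reverse_prefix] at hs ht ⊢
  exact List.prefix_of_prefix_length_le hs ht (by simpa using h)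

private lemma infix_concat_cases {u w : List Bool} {b : Bool} (h : u <:+: w ++ [b]) :
    u <:+: w ∨ ∃ s, s <:+ w ∧ u = s ++ [b] := by
  obtain ⟨p, q, hpq⟩ := h
  rcases q.eq_nil_or_concat with rfl | ⟨q', c, rfl⟩
  · rcases u.eq_nil_or_concat with rfl | ⟨u', c, rfl⟩
    · exact Or.inl List.nil_infix
    · have h2 : (p ++ u') ++ [c] = w ++ [b] := by
        simpa [List.concat_eq_append, List.append_assoc] using hpq
      obtain ⟨h3, h4⟩ := List.append_inj' h2 rfl
      refine Or.inr ⟨u', ⟨p, h3⟩, ?_⟩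
      simp [List.concat_eq_append, List.cons_eq_cons.1 h4]
  · have h2 : (p ++ u ++ q') ++ [c] = w ++ [b] := by
      simpa [List.concat_eq_append, List.append_assoc] using hpq
    obtain ⟨h3, _⟩ := List.append_inj' h2 rfl
    exact Or.inl ⟨p, q', by simpa [List.append_assoc] using h3⟩

private lemma suffix_append_single {s w : List Bool} (b : Bool) (hs : s <:+ w) :
    s ++ [b] <:+ w ++ [b] := by
  obtain ⟨p, rfl⟩ := hs
  exact ⟨p, by simp⟩

private lemma dropLast_infix {u w : List Bool} (h : u <:+: w) : u.dropLast <:+: w :=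
  (u.dropLast_prefix.isInfix).trans h

private lemma count_le_count_dropLast_add_one (l : List Bool) :
    (l.count true : ℤ) ≤ l.dropLast.count true + 1 := by
  rcases l.eq_nil_or_concat with rfl | ⟨l', c, rfl⟩
  · simp
  · simp only [List.concat_eq_append, List.count_append, List.dropLast_concat]
    cases c <;> simp

private lemma length_dropLast_eq {u s : List Bool} (h : u.length = s.length + 1) :
    u.dropLast.length = s.length := by
  simp [List.length_dropLast, h]

/-- Extraction for appending `false`. -/
private lemma extract_false {w : List Bool} (hw : IsBalanced w)
    (h : ¬ IsBalanced (w ++ [false])) :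
    ∃ u s : List Bool, u <:+: w ∧ s <:+ w ∧ u.length = s.length + 1 ∧
      (s.count true : ℤ) + 2 ≤ u.count true := by
  simp only [IsBalanced, not_forall] at h
  obtain ⟨u, v, hu, hv, hlen, hbad⟩ := h
  push_neg at hbad
  have hd : (v.count true : ℤ) + 2 ≤ u.count true ∨ (u.count true : ℤ) + 2 ≤ v.count true := by
    rcases abs_cases ((u.count true : ℤ) - v.count true) with ⟨h1, _⟩ | ⟨h1, _⟩ <;> omega
  clear hbad
  wlog hge : (v.count true : ℤ) + 2 ≤ u.count true generalizing u v with H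
  · refine H v u hv hu hlen.symm ?_ ?_
    · rcases hd with h1 | h1
      · exact Or.inr h1
      · exact Or.inl h1
    · rcases hd with h1 | h1
      · exact absurd h1 hge
      · exact h1
  clear hd
  rcases infix_concat_cases hu with hu' | ⟨s, hs, rfl⟩
  · rcases infix_concat_cases hv with hv' | ⟨s, hs, rfl⟩
    · exact absurd (hw u v hu' hv' hlen) (by rw [abs_sub_le_iff]; push_neg; intro; linarith)
    · refine ⟨u, s, hu', hs, by simpa using hlen, ?_⟩
      have hsc : ((s ++ [false]).count true : ℤ) = s.count true := by simp
      omega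
  · rcases infix_concat_cases hv with hv' | ⟨s', hs', rfl⟩
    · -- u = s ++ [false], count s ≥ count v + 2; compare s with v.dropLast
      exfalso
      have hlen2 : s.length = v.dropLast.length := by
        have := hlen; simp only [List.length_append, List.length_singleton] at this
        simp [List.length_dropLast, ← this]
      have h1 := hw s v.dropLast hs.isInfix (dropLast_infix hv') hlen2
      have h2 : (v.dropLast.count true : ℤ) ≤ v.count true := by
        have := v.dropLast_prefix.count_le true; exact_mod_cast this
      rw [abs_sub_le_iff] at h1
      have hsc : ((s ++ [false]).count true : ℤ) = s.count true := by simp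
      omega
    · -- both suffixes of same length, hence equal
      exfalso
      have : s = s' := by
        have h1 := suffix_append_single false hs
        have h2 := suffix_append_single false hs'
        have := (suffix_of_suffix_len h1 h2 (le_of_eq hlen)).eq_of_length hlen
        simpa using this
      subst this; omega

/-- Extraction for appending `true`. -/
private lemma extract_true {w : List Bool} (hw : IsBalanced w)
    (h : ¬ IsBalanced (w ++ [true])) :
    ∃ u s : List Bool, u <:+: w ∧ s <:+ w ∧ u.length = s.length + 1 ∧
      (u.count true : ℤ) + 1 ≤ s.count true := by
  simp only [IsBalanced, not_forall] at h
  obtain ⟨u, v, hu, hv, hlen, hbad⟩ := h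
  push_neg at hbad
  have hd : (v.count true : ℤ) + 2 ≤ u.count true ∨ (u.count true : ℤ) + 2 ≤ v.count true := by
    rcases abs_cases ((u.count true : ℤ) - v.count true) with ⟨h1, _⟩ | ⟨h1, _⟩ <;> omega
  clear hbad
  wlog hge : (v.count true : ℤ) + 2 ≤ u.count true generalizing u v with H
  · refine H v u hv hu hlen.symm ?_ ?_
    · rcases hd with h1 | h1
      · exact Or.inr h1
      · exact Or.inl h1
    · rcases hd with h1 | h1
      · exact absurd h1 hge
      · exact h1
  clear hd
  rcases infix_concat_cases hu with hu' | ⟨s, hs, rfl⟩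
  · rcases infix_concat_cases hv with hv' | ⟨s, hs, rfl⟩
    · exact absurd (hw u v hu' hv' hlen) (by rw [abs_sub_le_iff]; push_neg; intro; linarith)
    · -- u infix, v = s ++ [true]: count u ≥ count s + 3, contradiction via u.dropLast
      exfalso
      have hlen2 : u.dropLast.length = s.length := by
        have := hlen; simp only [List.length_append, List.length_singleton] at this
        exact length_dropLast_eq this
      have h1 := hw u.dropLast s (dropLast_infix hu') hs.isInfix hlen2
      have h2 := count_le_count_dropLast_add_one u
      have hsc : ((s ++ [true]).count true : ℤ) = s.count true + 1 := by
        push_cast [List.count_append]; simp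
      rw [abs_sub_le_iff] at h1
      omega
  · rcases infix_concat_cases hv with hv' | ⟨s', hs', rfl⟩
    · refine ⟨v, s, hv', hs, by simpa using hlen.symm, ?_⟩
      have hsc : ((s ++ [true]).count true : ℤ) = s.count true + 1 := by
        push_cast [List.count_append]; simp
      omega
    · exfalso
      have : s = s' := by
        have h1 := suffix_append_single true hs
        have h2 := suffix_append_single true hs'
        have := (suffix_of_suffix_len h1 h2 (le_of_eq hlen)).eq_of_length hlen
        simpa using this
      subst this; omega

/-- For every balanced word `w`, at least one of `w0`, `w1` is balanced. -/
theorem balanced_extend_right (w : List Bool) (hw : IsBalanced w) :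
    IsBalanced (w ++ [false]) ∨ IsBalanced (w ++ [true]) := by
  by_contra h
  push_neg at h
  obtain ⟨h0, h1⟩ := h
  obtain ⟨u, s, hu, hs, hul, hus⟩ := extract_false hw h0
  obtain ⟨x, t, hx, ht, hxl, hxt⟩ := extract_true hw h1
  rcases le_or_gt s.length t.length with hle | hlt
  · -- s is a suffix of t; write t = t' ++ s
    obtain ⟨t', rfl⟩ := suffix_of_suffix_len hs ht hle
    -- split x = x₀ ++ x₁ with |x₁| = |u|
    set x₀ := x.take t'.length with hx0
    set x₁ := x.drop t'.length with hx1
    have hxsplit : x = x₀ ++ x₁ := (x.take_append_drop t'.length).symm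
    have hlen1 : x₁.length = u.length := by
      simp only [hx1, List.length_drop]
      simp only [List.length_append] at hxl
      omega
    have hc1 := hw u x₁ hu ((List.drop_suffix _ _).isInfix.trans hx) hlen1.symm
    rw [abs_sub_le_iff] at hc1
    have hlen0 : t'.length = x₀.length := by
      simp only [hx0, List.length_take]
      simp only [List.length_append] at hxl
      omega
    have hc0 := hw t' x₀ ((t'.prefix_append _).isInfix.trans ht.isInfix)
      ((List.take_prefix _ _).isInfix.trans hx) hlen0
    rw [abs_sub_le_iff] at hc0
    have e1 : ((t' ++ s).count true : ℤ) = t'.count true + s.count true := by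
      push_cast [List.count_append]; ring
    have e2 : (x.count true : ℤ) = x₀.count true + x₁.count true := by
      rw [hxsplit]; push_cast [List.count_append]; ring
    omega
  · -- t is a proper suffix of s; write s = s' ++ t
    obtain ⟨s', rfl⟩ := suffix_of_suffix_len ht hs hlt.le
    set u₀ := u.take s'.length with hu0
    set u₁ := u.drop s'.length with hu1
    have husplit : u = u₀ ++ u₁ := (u.take_append_drop s'.length).symm
    have hlen1 : u₁.length = x.length := by
      simp only [hu1, List.length_drop]
      simp only [List.length_append] at hul
      omega
    have hc1 := hw u₁ x ((List.drop_suffix _ _).isInfix.trans hu) hx hlen1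
    rw [abs_sub_le_iff] at hc1
    have hlen0 : u₀.length = s'.length := by
      simp only [hu0, List.length_take]
      simp only [List.length_append] at hul
      omega
    have hc0 := hw u₀ s' ((List.take_prefix _ _).isInfix.trans hu)
      ((s'.prefix_append _).isInfix.trans hs.isInfix) hlen0
    rw [abs_sub_le_iff] at hc0
    have e1 : ((s' ++ t).count true : ℤ) = s'.count true + t.count true := by
      push_cast [List.count_append]; ring
    have e2 : (u.count true : ℤ) = u₀.count true + u₁.count true := by
      rw [husplit]; push_cast [List.count_append]; ring
    omega
end

section
/- If a binary word w has two coprime periods p and q and length |w| = p + q - 2, then w is a palindrome. -/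
def HasPeriod {α : Type*} (w : List α) (p : ℕ) : Prop :=
  0 < p ∧ ∀ i j : ℕ, i < w.length → j < w.length → i % p = j % p → w[i]? = w[j]?

/-- A binary word with two coprime periods `p`, `q` and length `p + q - 2`
(a central word) is a palindrome. -/
theorem central_palindrome (w : List Bool) (p q : ℕ)
    (hp : HasPeriod w p) (hq : HasPeriod w q) (hco : Nat.Coprime p q)
    (hlen : w.length = p + q - 2) :
    w.reverse = w := by
  obtain ⟨hp0, hpw⟩ := hp
  obtain ⟨hq0, hqw⟩ := hq
  set n := w.length with hnw
  by_cases hn0 : n = 0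
  · have : w = [] := List.length_eq_zero_iff.mp hn0
    simp [this]
  have hn1 : 1 ≤ n := Nat.one_le_iff_ne_zero.mpr hn0
  set m := p + q with hmdef
  have hm : m = n + 2 := by omega
  have hm3 : 3 ≤ m := by omega
  have hm0 : 0 < m := by omega
  have hcopm : Nat.Coprime p m := by
    have := (Nat.coprime_add_self_right (m := p) (n := q)).mpr hco
    rwa [Nat.add_comm q p] at this
  set g : ℕ → ℕ := fun k => (m - 1 + k * p) % m with hg
  have hglt : ∀ k, g k < m := fun k => Nat.mod_lt _ hm0
  -- step lemma
  have hstep : ∀ i, i < n → (i + p) % m < n → w[i]? = w[(i + p) % m]? := by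
    intro i hi hj
    by_cases h : i + p < m
    · rw [Nat.mod_eq_of_lt h] at hj ⊢
      exact hpw i (i + p) hi hj (Nat.add_mod_right i p).symm
    · have h2 : (i + p) % m = i - q := by
        rw [Nat.mod_eq_sub_mod (by omega), Nat.mod_eq_of_lt (by omega)]
        omega
      rw [h2] at hj ⊢
      refine hqw i (i - q) hi hj ?_
      conv_lhs => rw [show i = (i - q) + q by omega]
      rw [Nat.add_mod_right]
  have hgsucc : ∀ k, g (k + 1) = (g k + p) % m := by
    intro k
    simp only [hg]
    rw [Nat.mod_add_mod]
    ring_nf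
  -- chain lemma
  have hchain : ∀ d a, (∀ t, a ≤ t → t ≤ a + d → g t < n) →
      w[g a]? = w[g (a + d)]? := by
    intro d
    induction d with
    | zero => intro a _; rfl
    | succ d ih =>
      intro a hall
      have h1 := ih a (fun t ht1 ht2 => hall t ht1 (by omega))
      have h2 : w[g (a + d)]? = w[g (a + d + 1)]? := by
        rw [hgsucc]
        exact hstep (g (a + d)) (hall _ (by omega) (by omega))
          (by rw [← hgsucc]; exact hall _ (by omega) (by omega))
      rw [show a + (d + 1) = a + d + 1 by omega]
      exact h1.trans h2
  -- injectivity
  have hinj : ∀ k₁ k₂, k₁ < m → k₂ < m → g k₁ = g k₂ → k₁ = k₂ := by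
    intro k₁ k₂ h1 h2 he
    have he' : m - 1 + k₁ * p ≡ m - 1 + k₂ * p [MOD m] := he
    have h3 : k₁ * p ≡ k₂ * p [MOD m] := Nat.ModEq.add_left_cancel' _ he'
    have h4 : k₁ ≡ k₂ [MOD m] :=
      Nat.ModEq.cancel_right_of_coprime (by rw [Nat.gcd_comm]; exact hcopm) h3
    have h5 : k₁ % m = k₂ % m := h4
    rwa [Nat.mod_eq_of_lt h1, Nat.mod_eq_of_lt h2] at h5
  -- surjectivity
  have hsurj : ∀ v, v < m → ∃ k, k < m ∧ g k = v := by
    intro v hv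
    have hsur : Function.Surjective (fun k : Fin m => (⟨g k, hglt k⟩ : Fin m)) := by
      rw [← Finite.injective_iff_surjective]
      intro a b hab
      exact Fin.ext (hinj a b a.isLt b.isLt (congrArg Fin.val hab))
    obtain ⟨k, hk⟩ := hsur ⟨v, hv⟩
    exact ⟨k, k.isLt, congrArg Fin.val hk⟩
  have hg0 : g 0 = m - 1 := by
    simp only [hg]
    rw [Nat.zero_mul, Nat.add_zero, Nat.mod_eq_of_lt (by omega)]
  obtain ⟨L, hLm, hgL⟩ := hsurj (m - 2) (by omega)
  have hL0 : 0 < L := by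
    rcases Nat.eq_zero_or_pos L with h | h
    · rw [h, hg0] at hgL; omega
    · exact h
  have hlt : ∀ k, 0 < k → k < m → k ≠ L → g k < n := by
    intro k h1 h2 h3
    have hk := hglt k
    have hne1 : g k ≠ m - 1 := fun h => by
      have := hinj k 0 h2 hm0 (h.trans hg0.symm); omega
    have hne2 : g k ≠ m - 2 := fun h => h3 (hinj k L h2 hLm (h.trans hgL.symm))
    omega
  -- sum lemma
  have hsum : ∀ a b, (a + b = L ∨ a + b = m + L) → g a < n → g b < n →
      g a + g b = m - 3 := by
    intro a b hab ha hb
    have h1 : g a + g b ≡ (m - 1 + a * p) + (m - 1 + b * p) [MOD m] :=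
      Nat.ModEq.add (Nat.mod_modEq _ _) (Nat.mod_modEq _ _)
    have h2 : (m - 1 + a * p) + (m - 1 + b * p) = (m - 1) + ((m - 1) + (a + b) * p) := by
      ring
    have h3 : (a + b) * p ≡ L * p [MOD m] := by
      rcases hab with h | h
      · rw [h]
      · rw [h, Nat.add_mul]
        have hmp : m * p ≡ 0 [MOD m] := (Nat.modEq_zero_iff_dvd).mpr ⟨p, rfl⟩
        calc m * p + L * p ≡ 0 + L * p [MOD m] := Nat.ModEq.add_right _ hmp
          _ = L * p := by omega
    have h4 : (m - 1) + ((m - 1) + (a + b) * p) ≡ (m - 1) + (m - 2) [MOD m] := by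
      refine Nat.ModEq.add_left _ ?_
      calc (m - 1) + (a + b) * p ≡ (m - 1) + L * p [MOD m] := Nat.ModEq.add_left _ h3
        _ ≡ g L [MOD m] := (Nat.mod_modEq _ _).symm
        _ = m - 2 := hgL
    have h5 : g a + g b ≡ (m - 1) + (m - 2) [MOD m] := h1.trans (h2 ▸ h4)
    have h9 : (g a + g b) % m = ((m - 1) + (m - 2)) % m := h5
    have h10 : ((m - 1) + (m - 2)) % m = m - 3 := by
      rw [show (m - 1) + (m - 2) = m + (m - 3) by omega, Nat.add_mod_left,
        Nat.mod_eq_of_lt (by omega)]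
    rw [h10] at h9
    rcases Nat.lt_or_ge (g a + g b) m with h | h
    · rwa [Nat.mod_eq_of_lt h] at h9
    · rw [Nat.mod_eq_sub_mod h, Nat.mod_eq_of_lt (by omega)] at h9
      omega
  -- key palindromic property
  have key : ∀ i, i < n → w[i]? = w[n - 1 - i]? := by
    intro i hi
    obtain ⟨k, hkm, hgk⟩ := hsurj i (by omega)
    have hk0 : k ≠ 0 := fun h => by rw [h, hg0] at hgk; omega
    have hkL : k ≠ L := fun h => by rw [h, hgL] at hgk; omega
    rcases Nat.lt_or_ge k L with hkl | hkg
    · have hk'L : 0 < L - k ∧ L - k < L := by omega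
      have hgk' : g (L - k) < n := hlt (L - k) (by omega) (by omega) (by omega)
      have hsum' : g k + g (L - k) = m - 3 :=
        hsum k (L - k) (Or.inl (by omega)) (by omega) hgk'
      have hcc : w[g k]? = w[g (L - k)]? := by
        rcases Nat.le_total k (L - k) with h | h
        · have := hchain (L - k - k) k
            (fun t ht1 ht2 => hlt t (by omega) (by omega) (by omega))
          rwa [show k + (L - k - k) = L - k by omega] at this
        · have := hchain (k - (L - k)) (L - k)
            (fun t ht1 ht2 => hlt t (by omega) (by omega) (by omega))
          rw [show L - k + (k - (L - k)) = k by omega] at this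
          exact this.symm
      rw [hgk] at hcc hsum'
      rwa [show n - 1 - i = g (L - k) by omega]
    · have hkL' : L < k := lt_of_le_of_ne hkg (Ne.symm hkL)
      have hk'r : L < m + L - k ∧ m + L - k < m := by omega
      have hgk' : g (m + L - k) < n := hlt (m + L - k) (by omega) (by omega) (by omega)
      have hsum' : g k + g (m + L - k) = m - 3 :=
        hsum k (m + L - k) (Or.inr (by omega)) (by omega) hgk'
      have hcc : w[g k]? = w[g (m + L - k)]? := by
        rcases Nat.le_total k (m + L - k) with h | h
        · have := hchain (m + L - k - k) k
            (fun t ht1 ht2 => hlt t (by omega) (by omega) (by omega))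
          rwa [show k + (m + L - k - k) = m + L - k by omega] at this
        · have := hchain (k - (m + L - k)) (m + L - k)
            (fun t ht1 ht2 => hlt t (by omega) (by omega) (by omega))
          rw [show m + L - k + (k - (m + L - k)) = k by omega] at this
          exact this.symm
      rw [hgk] at hcc hsum'
      rwa [show n - 1 - i = g (m + L - k) by omega]
  -- conclude
  apply List.ext_getElem?
  intro i
  by_cases hi : i < n
  · rw [List.getElem?_reverse hi]
    exact (key i hi).symm
  · rw [List.getElem?_eq_none (by simpa using not_lt.mp hi),
      List.getElem?_eq_none (not_lt.mp hi)]
end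

section
/- If a binary word w has two coprime periods p and q and length p + q - 2, then w is balanced. -/
private lemma balanced_of_const (w : List Bool)
    (h : ∀ x ∈ w, ∀ y ∈ w, x = y) : IsBalanced w := by
  intro u v hu hv hlen
  by_cases hw : true ∈ w
  · have hu' : u.count true = u.length :=
      List.count_eq_length.mpr (fun b hb => (h b (hu.subset hb) true hw).symm)
    have hv' : v.count true = v.length :=
      List.count_eq_length.mpr (fun b hb => (h b (hv.subset hb) true hw).symm)
    rw [hu', hv', hlen]
    simp
  · have hu' : u.count true = 0 := List.count_eq_zero.mpr (fun hm => hw (hu.subset hm))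
    have hv' : v.count true = 0 := List.count_eq_zero.mpr (fun hm => hw (hv.subset hm))
    rw [hu', hv']
    simp

private lemma div_step (n a x : ℕ) (hn : 0 < n) (ha : a < n) :
    a * (x+2) / n = a * (x+1) / n + (if n - a ≤ a*(x+1) % n then 1 else 0) := by
  have hdm := Nat.div_add_mod (a*(x+1)) n
  have h2 : a*(x+2) = a*(x+1) + a := by ring
  have h1 : a*(x+2) = n * (a*(x+1)/n) + (a*(x+1)%n + a) := by omega
  rw [h1, Nat.mul_add_div hn]
  have hr : a*(x+1)%n < n := Nat.mod_lt _ hn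
  by_cases hc : n - a ≤ a*(x+1)%n
  · have : (a*(x+1)%n + a)/n = 1 := Nat.div_eq_of_lt_le (by omega) (by omega)
    rw [this, if_pos hc]
  · have : (a*(x+1)%n + a)/n = 0 := Nat.div_eq_of_lt (by omega)
    rw [this, if_neg hc]

private lemma div_bounds (n a s ℓ : ℕ) (hn : 0 < n) :
    a*(s+1)/n + a*ℓ/n ≤ a*(s+ℓ+1)/n ∧ a*(s+ℓ+1)/n ≤ a*(s+1)/n + a*ℓ/n + 1 := by
  have hx := Nat.div_add_mod (a*(s+1)) n
  have hy := Nat.div_add_mod (a*ℓ) n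
  have hsum : a*(s+ℓ+1) = n*(a*(s+1)/n + a*ℓ/n) + (a*(s+1)%n + a*ℓ%n) := by
    have h : a*(s+ℓ+1) = a*(s+1) + a*ℓ := by ring
    have h2 : n*(a*(s+1)/n + a*ℓ/n) = n*(a*(s+1)/n) + n*(a*ℓ/n) := Nat.mul_add _ _ _
    omega
  have heq : a*(s+ℓ+1)/n = a*(s+1)/n + a*ℓ/n + (a*(s+1)%n + a*ℓ%n)/n := by
    rw [hsum, Nat.mul_add_div hn]
  have h3 : (a*(s+1)%n + a*ℓ%n)/n < 2 := by
    have h1 : a*(s+1)%n < n := Nat.mod_lt _ hn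
    have h2 : a*ℓ%n < n := Nat.mod_lt _ hn
    exact (Nat.div_lt_iff_lt_mul hn).mpr (by omega)
  rw [heq]
  constructor
  · exact Nat.le_add_right _ _
  · have : (a*(s+1)%n + a*ℓ%n)/n ≤ 1 := by omega
    exact Nat.add_le_add_left this _

private lemma count_as_sum (w : List Bool) : ∀ (ℓ s : ℕ), s + ℓ ≤ w.length →
    (((w.drop s).take ℓ).count true : ℤ) =
      ∑ i ∈ Finset.range ℓ, (if w[s+i]? = some true then (1:ℤ) else 0) := by
  intro ℓ
  induction ℓ with
  | zero => simp
  | succ ℓ ih =>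
    intro s hs
    have hih := ih s (by omega)
    rw [List.take_succ, List.count_append]
    push_cast
    rw [hih, Finset.sum_range_succ]
    congr 1
    have hg : (w.drop s)[ℓ]? = w[s+ℓ]? := by
      rw [List.getElem?_drop]
    obtain ⟨b, hb⟩ : ∃ b, w[s+ℓ]? = some b := by
      cases hw : w[s+ℓ]? with
      | none => exfalso; rw [List.getElem?_eq_none_iff] at hw; omega
      | some b => exact ⟨b, rfl⟩
    rw [hg, hb]
    cases b <;> simp [hb]

private lemma tele_sum (a n : ℕ) : ∀ (ℓ s : ℕ),
    ∑ i ∈ Finset.range ℓ,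
        (((a*(s+i+2)/n : ℕ) : ℤ) - ((a*(s+i+1)/n : ℕ) : ℤ)) =
      ((a*(s+ℓ+1)/n : ℕ) : ℤ) - ((a*(s+1)/n : ℕ) : ℤ) := by
  intro ℓ
  induction ℓ with
  | zero => simp
  | succ ℓ ih =>
    intro s
    rw [Finset.sum_range_succ, ih]
    have h2 : s + (ℓ+1) + 1 = s + ℓ + 2 := by omega
    rw [h2]
    ring

private lemma step_lemma (w : List Bool) (p q n a : ℕ)
    (hp : HasPeriod w p) (hq : HasPeriod w q)
    (hn : n = p + q) (hp2 : 2 ≤ p)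
    (hL : w.length + 2 = n)
    (ha : a < n) (ha0 : 0 < a)
    (hap : a * p % n = n - 1) (haq : a * q % n = 1) :
    ∀ i, i < w.length → a * (i+1) % n + 1 < n → a * (i+1) % n + 1 ≠ n - a →
      ∃ j, j < w.length ∧ a * (j+1) % n = a * (i+1) % n + 1 ∧ w[j]? = w[i]? := by
  intro i hi h1 h2
  have hn0 : 0 < n := by omega
  by_cases hcase : i + q < w.length
  · refine ⟨i + q, hcase, ?_, ?_⟩
    · have he : a * (i + q + 1) = a * (i+1) + a * q := by ring
      rw [he, Nat.add_mod, haq, Nat.mod_eq_of_lt h1]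
    · exact hq.2 (i+q) i hcase hi (by simp [Nat.add_mod_right])
  · rcases (by omega : i + q = n - 2 ∨ i + q = n - 1 ∨ n ≤ i + q) with hc1 | hc2 | hc3
    · -- i + 1 = p - 1 : forbidden, ρ i + 1 = n - a
      exfalso
      have hip : i + 1 = p - 1 := by omega
      have hdm := Nat.div_add_mod (a*p) n
      have hx2 : a * (p-1) + a = a * p := by
        have hpp : p - 1 + 1 = p := by omega
        calc a*(p-1) + a = a*((p-1)+1) := by ring
          _ = a * p := by rw [hpp]
      have hx3 : a * (p-1) = n * (a*p/n) + (n-1-a) := by omega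
      have hfin : a * (i+1) % n = n - 1 - a := by
        rw [hip, hx3, Nat.mul_add_mod, Nat.mod_eq_of_lt (by omega)]
      omega
    · -- i + 1 = p : forbidden, ρ i = n - 1
      exfalso
      have hfin : a * (i+1) % n = n - 1 := by rw [show i+1 = p by omega, hap]
      omega
    · -- step down by p
      have hip : p ≤ i := by omega
      have hj : i - p + p = i := by omega
      have he : a * (i+1) = a*((i-p)+1) + a*p := by
        conv_lhs => rw [← hj]
        ring
      have hrn : a*((i-p)+1) % n < n := Nat.mod_lt _ hn0
      have hmod : a*(i+1) % n = (a*((i-p)+1) % n + (n-1)) % n := by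
        rw [he, Nat.add_mod, hap]
      rcases Nat.eq_zero_or_pos (a*((i-p)+1) % n) with h0 | hpos
      · exfalso
        rw [h0, Nat.zero_add, Nat.mod_eq_of_lt (show n - 1 < n by omega)] at hmod
        omega
      · have hsplit : a*((i-p)+1) % n + (n-1) = n + (a*((i-p)+1) % n - 1) := by omega
        rw [hsplit, Nat.add_mod_left,
          Nat.mod_eq_of_lt (show a*((i-p)+1) % n - 1 < n by omega)] at hmod
        refine ⟨i - p, by omega, by omega, ?_⟩
        refine hp.2 (i-p) i (by omega) hi ?_
        conv_rhs => rw [← hj]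
        rw [Nat.add_mod_right]

private lemma chain_lemma (w : List Bool) (p q n a : ℕ)
    (hp : HasPeriod w p) (hq : HasPeriod w q)
    (hn : n = p + q) (hp2 : 2 ≤ p)
    (hL : w.length + 2 = n)
    (ha : a < n) (ha0 : 0 < a)
    (hap : a * p % n = n - 1) (haq : a * q % n = 1) :
    ∀ k i, i < w.length → a*(i+1)%n + k < n →
      (∀ t, a*(i+1)%n < t → t ≤ a*(i+1)%n + k → t ≠ n - a) →
      ∃ j, j < w.length ∧ a*(j+1)%n = a*(i+1)%n + k ∧ w[j]? = w[i]? := by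
  intro k
  induction k with
  | zero => intro i hi _ _; exact ⟨i, hi, by omega, rfl⟩
  | succ k ih =>
    intro i hi hk ht
    obtain ⟨j, hj, hjr, hjw⟩ := ih i hi (by omega) (fun t u1 u2 => ht t u1 (by omega))
    obtain ⟨j', hj', hj'r, hj'w⟩ :=
      step_lemma w p q n a hp hq hn hp2 hL ha ha0 hap haq j hj
        (by omega) (by rw [hjr]; exact ht _ (by omega) (by omega))
    exact ⟨j', hj', by omega, hj'w.trans hjw⟩

private lemma key_lemma (w : List Bool) (p q n a : ℕ)
    (hp : HasPeriod w p) (hq : HasPeriod w q)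
    (hn : n = p + q) (hp2 : 2 ≤ p)
    (hL : w.length + 2 = n)
    (ha : a < n) (ha0 : 0 < a)
    (hap : a * p % n = n - 1) (haq : a * q % n = 1)
    (hcop : Nat.Coprime a n) :
    ∀ i j, i < w.length → j < w.length →
      (a*(i+1)%n < n - a ↔ a*(j+1)%n < n - a) → w[i]? = w[j]? := by
  have hn0 : 0 < n := by omega
  have hinj : ∀ i j, i < w.length → j < w.length → a*(i+1)%n = a*(j+1)%n → i = j := by
    intro i j hi hj h
    have h' : (i+1) % n = (j+1) % n :=
      Nat.ModEq.cancel_left_of_coprime hcop.symm h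
    rw [Nat.mod_eq_of_lt (by omega), Nat.mod_eq_of_lt (by omega)] at h'
    omega
  have hne : ∀ i, i < w.length → a*(i+1)%n ≠ n - a := by
    intro i hi h
    have hx : a * (n-1) + a = a * n := by
      have h1 : (n-1)+1 = n := by omega
      calc a*(n-1) + a = a*((n-1)+1) := by ring
        _ = a * n := by rw [h1]
    have hy : n * (a-1) + n = n * a := by
      have h1 : (a-1)+1 = a := by omega
      calc n*(a-1) + n = n*((a-1)+1) := by ring
        _ = n * a := by rw [h1]
    have hc : a * n = n * a := Nat.mul_comm a n
    have hz : a * (n-1) = n * (a-1) + (n - a) := by omega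
    have hw1 : a * (n-1) % n = n - a := by
      rw [hz, Nat.mul_add_mod, Nat.mod_eq_of_lt (show n - a < n by omega)]
    have h' : (i+1) % n = (n-1) % n :=
      Nat.ModEq.cancel_left_of_coprime hcop.symm
        (show a*(i+1)%n = a*(n-1)%n by rw [hw1]; exact h)
    rw [Nat.mod_eq_of_lt (by omega), Nat.mod_eq_of_lt (by omega)] at h'
    omega
  have main : ∀ i j, i < w.length → j < w.length →
      (a*(i+1)%n < n - a ↔ a*(j+1)%n < n - a) →
      a*(i+1)%n ≤ a*(j+1)%n → w[i]? = w[j]? := by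
    intro i j hi hj hiff hle
    have hjn : a*(j+1)%n < n := Nat.mod_lt _ hn0
    have hb : ∀ t, a*(i+1)%n < t → t ≤ a*(i+1)%n + (a*(j+1)%n - a*(i+1)%n) →
        t ≠ n - a := by
      intro t u1 u2 u3
      by_cases hs : a*(i+1)%n < n - a
      · have := hiff.mp hs
        omega
      · have := hne i hi
        omega
    obtain ⟨j0, hj0, hj0r, hj0w⟩ :=
      chain_lemma w p q n a hp hq hn hp2 hL ha ha0 hap haq
        (a*(j+1)%n - a*(i+1)%n) i hi (by omega) hb
    have hjj : j0 = j := hinj j0 j hj0 hj (by omega)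
    rw [← hjj]
    exact hj0w.symm
  intro i j hi hj hiff
  rcases le_total (a*(i+1)%n) (a*(j+1)%n) with h | h
  · exact main i j hi hj hiff h
  · exact (main j i hj hi hiff.symm h).symm

/-- A binary word with two coprime periods `p`, `q` and length `p + q - 2`
(a central word) is balanced. -/
theorem central_balanced (w : List Bool) (p q : ℕ)
    (hp : HasPeriod w p) (hq : HasPeriod w q) (hco : Nat.Coprime p q)
    (hlen : w.length = p + q - 2) :
    IsBalanced w := by
  have hconst : ∀ r, HasPeriod w r → r = 1 → IsBalanced w := by
    intro r hr hr1
    apply balanced_of_const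
    intro x hx y hy
    obtain ⟨ix, hix⟩ := List.mem_iff_getElem?.mp hx
    obtain ⟨iy, hiy⟩ := List.mem_iff_getElem?.mp hy
    have hixl : ix < w.length := by
      by_contra hcon
      rw [List.getElem?_eq_none_iff.mpr (by omega)] at hix
      cases hix
    have hiyl : iy < w.length := by
      by_contra hcon
      rw [List.getElem?_eq_none_iff.mpr (by omega)] at hiy
      cases hiy
    have := hr.2 ix iy hixl hiyl (by simp [hr1, Nat.mod_one])
    rw [hix, hiy] at this
    exact Option.some.inj this
  by_cases hp1 : p ≤ 1
  · exact hconst p hp (by have := hp.1; omega)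
  by_cases hq1 : q ≤ 1
  · exact hconst q hq (by have := hq.1; omega)
  have hp2 : 2 ≤ p := by omega
  have hq2 : 2 ≤ q := by omega
  set n := p + q with hn
  have hn0 : 0 < n := by omega
  have hn4 : 4 ≤ n := by omega
  have hL : w.length + 2 = n := by omega
  -- construct the modular inverse a of q mod n
  have hco2 : Nat.Coprime q n := by
    rw [hn]; exact Nat.coprime_add_self_right.mpr hco.symm
  obtain ⟨m, -, hm⟩ := Nat.exists_mul_mod_eq_one_of_coprime hco2 (by omega)
  set a := m % n with hadef
  have ha : a < n := Nat.mod_lt _ hn0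
  have haq : a * q % n = 1 := by
    rw [hadef, Nat.mul_mod, Nat.mod_mod_of_dvd _ dvd_rfl, ← Nat.mul_mod, Nat.mul_comm]
    exact hm
  have ha0 : 0 < a := by
    rcases Nat.eq_zero_or_pos a with h0 | h1
    · exfalso
      rw [h0, Nat.zero_mul, Nat.zero_mod] at haq
      omega
    · exact h1
  have hap : a * p % n = n - 1 := by
    have h1 : (a*p + a*q) % n = 0 := by
      have he : a*p + a*q = n*a := by rw [hn]; ring
      rw [he, Nat.mul_mod_right]
    have h2 : (a*p%n + 1) % n = 0 := by
      calc (a*p%n + 1)%n = (a*p%n + a*q%n)%n := by rw [haq]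
        _ = (a*p + a*q)%n := (Nat.add_mod _ _ _).symm
        _ = 0 := h1
    have h3 : a*p%n < n := Nat.mod_lt _ hn0
    have h4 : n ∣ (a*p%n + 1) := Nat.dvd_of_mod_eq_zero h2
    have h5 : n ≤ a*p%n + 1 := Nat.le_of_dvd (by omega) h4
    omega
  have hcopan : Nat.Coprime a n := by
    have hd := Nat.div_add_mod (a*q) n
    have he : a*q - n*(a*q/n) = 1 := by omega
    have d1 : Nat.gcd a n ∣ a*q := Dvd.dvd.mul_right (Nat.gcd_dvd_left a n) q
    have d2 : Nat.gcd a n ∣ n*(a*q/n) := Dvd.dvd.mul_right (Nat.gcd_dvd_right a n) _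
    have d3 : Nat.gcd a n ∣ 1 := he ▸ Nat.dvd_sub d1 d2
    exact Nat.dvd_one.mp d3
  have key := key_lemma w p q n a hp hq hn hp2 hL ha ha0 hap haq hcopan
  -- the two letter classes
  have hTex : ∃ T : ℤ, (T = 0 ∨ T = 1) ∧
      ∀ x, x < w.length → ¬(a*(x+1)%n < n - a) →
        (if w[x]? = some true then (1:ℤ) else 0) = T := by
    by_cases hex : ∃ x, x < w.length ∧ ¬(a*(x+1)%n < n - a)
    · obtain ⟨x1, hx1, hx1s⟩ := hex
      refine ⟨if w[x1]? = some true then (1:ℤ) else 0,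
        by split <;> simp, ?_⟩
      intro x hx hxs
      rw [key x x1 hx hx1 (iff_of_false hxs hx1s)]
    · exact ⟨0, Or.inl rfl, fun x hx hxs => absurd ⟨x, hx, hxs⟩ hex⟩
  have hZex : ∃ Z : ℤ, (Z = 0 ∨ Z = 1) ∧
      ∀ x, x < w.length → a*(x+1)%n < n - a →
        (if w[x]? = some true then (1:ℤ) else 0) = Z := by
    by_cases hex : ∃ x, x < w.length ∧ a*(x+1)%n < n - a
    · obtain ⟨x1, hx1, hx1s⟩ := hex
      refine ⟨if w[x1]? = some true then (1:ℤ) else 0,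
        by split <;> simp, ?_⟩
      intro x hx hxs
      rw [key x x1 hx hx1 (iff_of_true hxs hx1s)]
    · exact ⟨0, Or.inl rfl, fun x hx hxs => absurd ⟨x, hx, hxs⟩ hex⟩
  obtain ⟨T, hT01, hT⟩ := hTex
  obtain ⟨Z, hZ01, hZ⟩ := hZex
  have hval : ∀ x, x < w.length →
      (if w[x]? = some true then (1:ℤ) else 0) =
        (((a*(x+2)/n : ℕ) : ℤ) - ((a*(x+1)/n : ℕ) : ℤ)) * (T - Z) + Z := by
    intro x hx
    rw [div_step n a x hn0 ha]
    by_cases hc : n - a ≤ a*(x+1)%n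
    · rw [if_pos hc, hT x hx (by omega)]
      push_cast
      ring
    · rw [if_neg hc, hZ x hx (by omega)]
      push_cast
      ring
  have hcount : ∀ s ℓ, s + ℓ ≤ w.length →
      (((w.drop s).take ℓ).count true : ℤ) =
        (((a*(s+ℓ+1)/n : ℕ) : ℤ) - ((a*(s+1)/n : ℕ) : ℤ)) * (T - Z) + (ℓ : ℤ) * Z := by
    intro s ℓ hs
    rw [count_as_sum w ℓ s hs]
    have hterm : ∀ i ∈ Finset.range ℓ,
        (if w[s+i]? = some true then (1:ℤ) else 0) =
          (((a*(s+i+2)/n : ℕ) : ℤ) - ((a*(s+i+1)/n : ℕ) : ℤ)) * (T - Z) + Z := by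
      intro i hi
      have hix : s + i < w.length := by
        have := Finset.mem_range.mp hi; omega
      exact hval (s+i) hix
    rw [Finset.sum_congr rfl hterm, Finset.sum_add_distrib, ← Finset.sum_mul,
      tele_sum a n ℓ s, Finset.sum_const, Finset.card_range]
    push_cast
    ring
  -- final assembly
  intro u v hu hv hlen'
  obtain ⟨x, y, hxy⟩ := hu
  obtain ⟨x', y', hxy'⟩ := hv
  have hul : x.length + u.length ≤ w.length := by
    rw [← hxy]; simp [List.length_append]
  have hvl : x'.length + v.length ≤ w.length := by
    rw [← hxy']; simp [List.length_append]
  have hu2 : (w.drop x.length).take u.length = u := by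
    rw [← hxy, List.append_assoc, List.drop_left, List.take_left]
  have hv2 : (w.drop x'.length).take v.length = v := by
    rw [← hxy', List.append_assoc, List.drop_left, List.take_left]
  have hcu := hcount x.length u.length hul
  have hcv := hcount x'.length v.length hvl
  rw [hu2] at hcu
  rw [hv2] at hcv
  rw [hcu, hcv, ← hlen']
  set A := ((a*(x.length+u.length+1)/n : ℕ) : ℤ) - ((a*(x.length+1)/n : ℕ) : ℤ) with hA
  set B := ((a*(x'.length+u.length+1)/n : ℕ) : ℤ) - ((a*(x'.length+1)/n : ℕ) : ℤ) with hB
  have habs : |A - B| ≤ 1 := by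
    have b1 := div_bounds n a x.length u.length hn0
    have b2 := div_bounds n a x'.length u.length hn0
    rw [hA, hB, abs_le]
    constructor <;> omega
  have hTZ : |T - Z| ≤ 1 := by
    rcases hT01 with h | h <;> rcases hZ01 with h' | h' <;> rw [h, h'] <;> norm_num
  have hre : (A*(T-Z) + (u.length:ℤ)*Z) - (B*(T-Z) + (u.length:ℤ)*Z) = (A-B)*(T-Z) := by
    ring
  rw [hre, abs_mul]
  calc |A-B| * |T-Z| ≤ 1*1 := mul_le_mul habs hTZ (abs_nonneg _) zero_le_one
    _ = 1 := mul_one 1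
end

section
/- A binary word w is central (i.e., has two coprime periods p, q with |w| = p+q-2) if and only if w is a power of a single letter or there exist palindromes P and Q such that w = P01Q = Q10P. -/
private lemma chain_lemma_s10 (w : List Bool) (p q : ℕ) (hp : HasPeriod w p) (hq : HasPeriod w q)
    (hlen : w.length + 2 = p + q) (start : ℕ) :
    ∀ m : ℕ, (∀ k, k ≤ m → (start + k * p) % (p + q) < w.length) →
      w[start % (p + q)]? = w[(start + m * p) % (p + q)]? := by
  have hN : 0 < p + q := by have := hp.1; omega
  intro m
  induction m with
  | zero => intro _; simp
  | succ m ih =>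
    intro hvalid
    have hx : (start + m * p) % (p + q) < w.length := hvalid m (Nat.le_succ m)
    have hx' : (start + (m + 1) * p) % (p + q) < w.length := hvalid (m + 1) le_rfl
    rw [ih (fun k hk => hvalid k (le_trans hk (Nat.le_succ m)))]
    set x := (start + m * p) % (p + q) with hxdef
    have hstep : (start + (m + 1) * p) % (p + q) = (x + p) % (p + q) := by
      rw [hxdef, Nat.mod_add_mod]; congr 1; ring
    rw [hstep] at hx' ⊢
    have hxN : x < p + q := Nat.mod_lt _ hN
    by_cases hcase : x + p < p + q
    · rw [Nat.mod_eq_of_lt hcase] at hx' ⊢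
      exact hp.2 x (x + p) hx hx' (Nat.add_mod_right x p).symm
    · have hge : p + q ≤ x + p := le_of_not_gt hcase
      have h2 : (x + p) % (p + q) = x + p - (p + q) := by
        rw [Nat.mod_eq_sub_mod hge, Nat.mod_eq_of_lt (by omega)]
      rw [h2] at hx' ⊢
      have hqx : q ≤ x := by omega
      have h3 : x + p - (p + q) = x - q := by omega
      rw [h3] at hx' ⊢
      exact (hq.2 (x - q) x hx' hx (by rw [← Nat.mod_eq_sub_mod hqx])).symm

private lemma hasPeriod_of_step (w : List Bool) (p : ℕ) (hp : 0 < p)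
    (h : ∀ i, i + p < w.length → w[i]? = w[i + p]?) : HasPeriod w p := by
  have H : ∀ k i, i + k * p < w.length → w[i]? = w[i + k * p]? := by
    intro k
    induction k with
    | zero => intro i _; simp
    | succ k ih =>
      intro i hi
      have he : i + (k + 1) * p = i + k * p + p := by ring
      rw [he] at hi ⊢
      exact (ih i (by omega)).trans (h (i + k * p) hi)
  refine ⟨hp, ?_⟩
  have main : ∀ i j, i ≤ j → j < w.length → i % p = j % p → w[i]? = w[j]? := by
    intro i j hle hj hmod
    have hdvd : p ∣ j - i := (Nat.modEq_iff_dvd' hle).1 hmod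
    obtain ⟨k, hk⟩ := hdvd
    have hj' : j = i + k * p := by rw [mul_comm]; rw [← hk]; omega
    rw [hj'] at hj ⊢
    exact H k i hj
  intro i j hi hj hmod
  rcases le_total i j with hle | hle
  · exact main i j hle hj hmod
  · exact (main j i hle hi hmod.symm).symm

private lemma replicate_of_period_one (w : List Bool) (h : HasPeriod w 1) :
    ∃ (a : Bool) (n : ℕ), w = List.replicate n a := by
  rcases Nat.eq_zero_or_pos w.length with h0 | hpos
  · exact ⟨true, 0, List.eq_nil_of_length_eq_zero h0⟩
  refine ⟨w[0]'hpos, w.length, List.eq_replicate_iff.2 ⟨rfl, ?_⟩⟩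
  intro b hb
  obtain ⟨i, hi, rfl⟩ := List.mem_iff_getElem.1 hb
  have := h.2 i 0 hi hpos (by simp [Nat.mod_one])
  rw [List.getElem?_eq_getElem hi,
    List.getElem?_eq_getElem hpos] at this
  exact Option.some.inj this

private lemma get?_to_getElem (w : List Bool) (i j : ℕ) (hi : i < w.length) (hj : j < w.length)
    (h : w[i]? = w[j]?) : w[i]'hi = w[j]'hj := by
  rw [List.getElem?_eq_getElem hi,
    List.getElem?_eq_getElem hj] at h
  exact Option.some.inj h

private lemma decomp_lemma (w : List Bool) (k : ℕ) (h1 : k < w.length) (h2 : k + 1 < w.length) :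
    w = w.take k ++ [w[k]'h1, w[k+1]'h2] ++ w.drop (k + 2) := by
  conv_lhs => rw [← List.take_append_drop k w]
  rw [List.append_assoc]
  congr 1
  rw [List.drop_eq_getElem_cons h1, List.drop_eq_getElem_cons h2]
  simp

private lemma forward_main (w : List Bool) (p q : ℕ) (hp2 : 2 ≤ p) (hq2 : 2 ≤ q)
    (hcop : Nat.Coprime p q) (hp : HasPeriod w p) (hq : HasPeriod w q)
    (hlen : w.length = p + q - 2) :
    (∃ (a : Bool) (n : ℕ), w = List.replicate n a) ∨
      ∃ P Q : List Bool, P.reverse = P ∧ Q.reverse = Q ∧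
        w = P ++ [false, true] ++ Q ∧ w = Q ++ [true, false] ++ P := by
  have hN4 : 4 ≤ p + q := by omega
  have hlen' : w.length + 2 = p + q := by omega
  have hcopN : Nat.Coprime p (p + q) := by
    have h := Nat.gcd_add_self_right p q
    unfold Nat.Coprime at hcop ⊢
    rw [Nat.add_comm p q, h]; exact hcop
  obtain ⟨u, -, hu⟩ := Nat.exists_mul_mod_eq_one_of_coprime hcopN (by omega)
  set N := p + q with hN
  -- hu : p * u % N = 1
  have hpu : p * u ≡ 1 [MOD N] := by
    show p * u % N = 1 % N
    rw [hu, Nat.mod_eq_of_lt (by omega)]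
  have hup : u * p ≡ 1 [MOD N] := by rwa [mul_comm] at hpu
  have cancel : ∀ x y : ℕ, x * u ≡ y * u [MOD N] → x ≡ y [MOD N] := by
    intro x y h
    calc x = x * 1 := (mul_one x).symm
      _ ≡ x * (u * p) [MOD N] := (Nat.ModEq.mul_left x hup).symm
      _ = x * u * p := by ring
      _ ≡ y * u * p [MOD N] := h.mul_right p
      _ = y * (u * p) := by ring
      _ ≡ y * 1 [MOD N] := Nat.ModEq.mul_left y hup
      _ = y := mul_one y
  have hval_eq : ∀ x y : ℕ, x < N → y < N → x ≡ y [MOD N] → x = y := by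
    intro x y hx hy h
    have : x % N = y % N := h
    rwa [Nat.mod_eq_of_lt hx, Nat.mod_eq_of_lt hy] at this
  set s : ℕ → ℕ := fun i => (i + 1) * u % N with hs_def
  set a : ℕ := (N - 1) * u % N with ha_def
  have hsmod : ∀ i, s i ≡ (i + 1) * u [MOD N] := fun i => Nat.mod_modEq _ _
  have hs_lt : ∀ i, s i < N := fun i => Nat.mod_lt _ (by omega)
  have ha_lt : a < N := Nat.mod_lt _ (by omega)
  have hamod : a ≡ (N - 1) * u [MOD N] := Nat.mod_modEq _ _
  have ha_pos : 1 ≤ a := by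
    rcases Nat.eq_zero_or_pos a with h0 | h; swap; · exact h
    exfalso
    have : (N - 1) * u ≡ 0 * u [MOD N] := by rw [zero_mul]; exact h0 ▸ hamod.symm
    have h2 : N - 1 ≡ 0 [MOD N] := cancel _ _ this
    have h3 : N ∣ N - 1 := Nat.modEq_zero_iff_dvd.1 h2
    have := Nat.le_of_dvd (by omega) h3
    omega
  have hs_pos : ∀ i, i < w.length → 1 ≤ s i := by
    intro i hi
    rcases Nat.eq_zero_or_pos (s i) with h0 | h; swap; · exact h
    exfalso
    have : (i + 1) * u ≡ 0 * u [MOD N] := by rw [zero_mul]; exact h0 ▸ (hsmod i).symm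
    have h2 : i + 1 ≡ 0 [MOD N] := cancel _ _ this
    have h3 : N ∣ i + 1 := Nat.modEq_zero_iff_dvd.1 h2
    have := Nat.le_of_dvd (by omega) h3
    omega
  have hs_ne : ∀ i, i < w.length → s i ≠ a := by
    intro i hi hsa
    have : (i + 1) * u ≡ (N - 1) * u [MOD N] := (hsmod i).symm.trans (hsa ▸ hamod)
    have h2 : i + 1 ≡ N - 1 [MOD N] := cancel _ _ this
    have h3 : i + 1 = N - 1 := hval_eq _ _ (by omega) (by omega) h2
    omega
  -- the main chain corollary
  have sameArc : ∀ i j, i < w.length → j < w.length → s i ≤ s j →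
      (∀ t, s i ≤ t → t ≤ s j → t ≠ a) → w[i]? = w[j]? := by
    intro i j hi hj hle havoid
    set m := s j - s i with hm
    have key : ∀ k, (i + k * p + 1) * u ≡ s i + k [MOD N] := by
      intro k
      calc (i + k * p + 1) * u = (i + 1) * u + k * (p * u) := by ring
        _ ≡ (i + 1) * u + k * 1 [MOD N] := Nat.ModEq.add_left _ (Nat.ModEq.mul_left k hpu)
        _ = (i + 1) * u + k := by ring
        _ ≡ s i + k [MOD N] := Nat.ModEq.add_right k (hsmod i).symm
    have hvalid : ∀ k, k ≤ m → (i + k * p) % N < w.length := by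
      intro k hk
      have hxlt : (i + k * p) % N < N := Nat.mod_lt _ (by omega)
      by_contra hcon
      have hcases : (i + k * p) % N = N - 1 ∨ (i + k * p) % N = N - 2 := by omega
      have hsk1 : 1 ≤ s i + k := by have := hs_pos i hi; omega
      have hsk2 : s i + k ≤ N - 1 := by have := hs_lt j; omega
      rcases hcases with hx | hx
      · -- s i + k ≡ 0 mod N
        have h1 : i + k * p ≡ N - 1 [MOD N] := (Nat.mod_modEq _ _).symm.trans (by rw [hx])
        have h2 : i + k * p + 1 ≡ 0 [MOD N] := by
          have := h1.add_right 1
          have he : N - 1 + 1 = N := by omega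
          rw [he] at this
          exact this.trans (Nat.modEq_zero_iff_dvd.2 dvd_rfl)
        have h3 : s i + k ≡ 0 * u [MOD N] := (key k).symm.trans (h2.mul_right u)
        have h4 : s i + k ≡ 0 [MOD N] := by rwa [zero_mul] at h3
        have h5 : N ∣ s i + k := Nat.modEq_zero_iff_dvd.1 h4
        have := Nat.le_of_dvd (by omega) h5
        omega
      · -- s i + k ≡ a mod N
        have h1 : i + k * p ≡ N - 2 [MOD N] := (Nat.mod_modEq _ _).symm.trans (by rw [hx])
        have h2 : i + k * p + 1 ≡ N - 1 [MOD N] := by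
          have := h1.add_right 1
          have he : N - 2 + 1 = N - 1 := by omega
          rwa [he] at this
        have h3 : s i + k ≡ a [MOD N] :=
          (key k).symm.trans ((h2.mul_right u).trans hamod.symm)
        have h4 : s i + k = a := hval_eq _ _ (by omega) ha_lt h3
        exact havoid (s i + k) (by omega) (by omega) h4
    have hchain := chain_lemma_s10 w p q hp hq hlen' i m hvalid
    have hstart : i % N = i := Nat.mod_eq_of_lt (by omega)
    have hend : (i + m * p) % N = j := by
      have h1 : (i + m * p + 1) * u ≡ (j + 1) * u [MOD N] := by
        calc (i + m * p + 1) * u ≡ s i + m [MOD N] := key m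
          _ = s j := by omega
          _ ≡ (j + 1) * u [MOD N] := hsmod j
      have h2 : i + m * p + 1 ≡ j + 1 [MOD N] := cancel _ _ h1
      have h3 : i + m * p ≡ j [MOD N] := Nat.ModEq.add_right_cancel' 1 h2
      exact hval_eq _ _ (Nat.mod_lt _ (by omega)) (by omega) ((Nat.mod_modEq _ _).trans h3)
    rw [hstart, hend] at hchain
    exact hchain
  -- valid indices
  have hp1lt : p - 1 < w.length := by omega
  have hp2lt : p - 2 < w.length := by omega
  have hq1lt : q - 1 < w.length := by omega
  have hq2lt : q - 2 < w.length := by omega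
  -- special s-values
  have hsp1 : s (p - 1) = 1 := by
    have he : p - 1 + 1 = p := by omega
    show (p - 1 + 1) * u % N = 1
    rw [he, hu]
  have hap : (p - 1) * u ≡ a + 1 [MOD N] := by
    have e : (p - 1) * u + N * u = (N - 1) * u + p * u := by
      have h1 : p - 1 + N = N - 1 + p := by omega
      calc (p - 1) * u + N * u = (p - 1 + N) * u := by ring
        _ = (N - 1 + p) * u := by rw [h1]
        _ = (N - 1) * u + p * u := by ring
    have hN0 : (0 : ℕ) ≡ N * u [MOD N] := (Nat.modEq_zero_iff_dvd.2 ⟨u, rfl⟩).symm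
    calc (p - 1) * u ≡ (p - 1) * u + N * u [MOD N] := by
          simpa using Nat.ModEq.add_left ((p - 1) * u) hN0
      _ = (N - 1) * u + p * u := e
      _ ≡ a + 1 [MOD N] := Nat.ModEq.add hamod.symm hpu
  have hsp2 : s (p - 2) = a + 1 := by
    have he : p - 2 + 1 = p - 1 := by omega
    have h1 : s (p - 2) = (a + 1) % N := by
      show (p - 2 + 1) * u % N = (a + 1) % N
      rw [he]; exact hap
    have hne0 : s (p - 2) ≠ 0 := by have := hs_pos _ hp2lt; omega
    have haN : a + 1 ≠ N := by
      intro hc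
      rw [h1, hc, Nat.mod_self] at hne0
      exact hne0 rfl
    rw [h1, Nat.mod_eq_of_lt (by omega)]
  have ha2N : a + 1 < N := by
    have := hs_lt (p - 2); omega
  have hsq2 : s (q - 2) = a - 1 ∧ 2 ≤ a := by
    have he : q - 2 + 1 = q - 1 := by omega
    have h1 : s (q - 2) ≡ (q - 1) * u [MOD N] := by
      have := hsmod (q - 2); rwa [he] at this
    have h2 : (q - 1) * u + p * u ≡ a [MOD N] := by
      have e : (q - 1) * u + p * u = (N - 1) * u := by
        have h3 : q - 1 + p = N - 1 := by omega
        calc (q - 1) * u + p * u = (q - 1 + p) * u := by ring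
          _ = (N - 1) * u := by rw [h3]
      rw [e]; exact hamod.symm
    have h3 : s (q - 2) + 1 ≡ a [MOD N] := by
      calc s (q - 2) + 1 ≡ (q - 1) * u + 1 [MOD N] := h1.add_right 1
        _ ≡ (q - 1) * u + p * u [MOD N] := Nat.ModEq.add_left _ hpu.symm
        _ ≡ a [MOD N] := h2
    have hslt := hs_lt (q - 2)
    have hspos := hs_pos _ hq2lt
    have hsN : s (q - 2) + 1 ≠ N := by
      intro hc
      have h4 : a ≡ 0 [MOD N] := by
        have := h3.symm
        rw [hc] at this
        exact this.trans (Nat.modEq_zero_iff_dvd.2 dvd_rfl)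
      have h5 : N ∣ a := Nat.modEq_zero_iff_dvd.1 h4
      rcases Nat.eq_zero_of_dvd_of_lt h5 ha_lt with h6
      omega
    have h7 : s (q - 2) + 1 = a := hval_eq _ _ (by omega) ha_lt h3
    omega
  have hsq1 : s (q - 1) = N - 1 := by
    have he : q - 1 + 1 = q := by omega
    have h1 : s (q - 1) ≡ q * u [MOD N] := by
      have := hsmod (q - 1); rwa [he] at this
    have h2 : s (q - 1) + 1 ≡ 0 [MOD N] := by
      calc s (q - 1) + 1 ≡ q * u + 1 [MOD N] := h1.add_right 1
        _ ≡ q * u + p * u [MOD N] := Nat.ModEq.add_left _ hpu.symm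
        _ = N * u := by rw [hN]; ring
        _ ≡ 0 [MOD N] := Nat.modEq_zero_iff_dvd.2 ⟨u, rfl⟩
    have h3 : N ∣ s (q - 1) + 1 := Nat.modEq_zero_iff_dvd.1 h2
    have hslt := hs_lt (q - 1)
    have hpos := hs_pos _ hq1lt
    have := Nat.le_of_dvd (by omega) h3
    have h4 : s (q - 1) + 1 ≤ N := by omega
    omega
  obtain ⟨hsq2v, ha2⟩ := hsq2
  -- class constancy
  have classLow : ∀ i, i < w.length → s i < a → w[i]? = w[p - 1]? := by
    intro i hi hlow
    have hpos := hs_pos i hi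
    refine (sameArc (p - 1) i hp1lt hi (by omega) ?_).symm
    intro t h1 h2 hc; omega
  have classHigh : ∀ i, i < w.length → a < s i → w[i]? = w[p - 2]? := by
    intro i hi hhigh
    refine (sameArc (p - 2) i hp2lt hi (by omega) ?_).symm
    intro t h1 h2 hc; omega
  -- master palindromic lemma
  have master : ∀ i j, i < w.length → j < w.length → (i + j + 3) ≡ p [MOD N] →
      w[i]? = w[j]? := by
    intro i j hi hj hsum
    have h1 : (i + j + 2) + 1 ≡ (p - 1) + 1 [MOD N] := by
      have he : p - 1 + 1 = p := by omega
      rw [he]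
      have he2 : i + j + 2 + 1 = i + j + 3 := by omega
      rw [he2]; exact hsum
    have h2 : i + j + 2 ≡ p - 1 [MOD N] := Nat.ModEq.add_right_cancel' 1 h1
    have h3 : s i + s j ≡ a + 1 [MOD N] := by
      calc s i + s j ≡ (i + 1) * u + (j + 1) * u [MOD N] := Nat.ModEq.add (hsmod i) (hsmod j)
        _ = (i + j + 2) * u := by ring
        _ ≡ (p - 1) * u [MOD N] := h2.mul_right u
        _ ≡ a + 1 [MOD N] := hap
    have h4 : (s i + s j) % N = a + 1 := by
      have : (s i + s j) % N = (a + 1) % N := h3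
      rwa [Nat.mod_eq_of_lt ha2N] at this
    have hsi := hs_lt i; have hsj := hs_lt j
    have hsipos := hs_pos i hi; have hsjpos := hs_pos j hj
    have hsia := hs_ne i hi; have hsja := hs_ne j hj
    have hcases : s i + s j = a + 1 ∨ s i + s j = N + (a + 1) := by
      rcases Nat.lt_or_ge (s i + s j) N with hlt | hge
      · left; rwa [Nat.mod_eq_of_lt hlt] at h4
      · right
        have h5 : (s i + s j) % N = s i + s j - N := by
          rw [Nat.mod_eq_sub_mod hge, Nat.mod_eq_of_lt (by omega)]
        omega
    rcases hcases with hc | hc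
    · -- both < a
      have hia : s i < a := by omega
      have hja : s j < a := by omega
      rcases le_total (s i) (s j) with hle | hle
      · exact sameArc i j hi hj hle (by intro t h1' h2' hc'; omega)
      · exact (sameArc j i hj hi hle (by intro t h1' h2' hc'; omega)).symm
    · -- both > a
      have hia : a < s i := by omega
      have hja : a < s j := by omega
      rcases le_total (s i) (s j) with hle | hle
      · exact sameArc i j hi hj hle (by intro t h1' h2' hc'; omega)
      · exact (sameArc j i hj hi hle (by intro t h1' h2' hc'; omega)).symm
  have hgs : ∀ i (hi : i < w.length), w[i]? = some (w[i]'hi) := fun i hi => by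
    rw [List.getElem?_eq_getElem hi]
  by_cases hbeq : w[p - 2]? = w[p - 1]?
  · -- constant word
    left
    have hall : ∀ i, i < w.length → w[i]? = w[p - 1]? := by
      intro i hi
      rcases lt_trichotomy (s i) a with h | h | h
      · exact classLow i hi h
      · exact absurd h (hs_ne i hi)
      · exact (classHigh i hi h).trans hbeq
    refine ⟨w[p-1]'hp1lt, w.length, List.eq_replicate_iff.2 ⟨rfl, ?_⟩⟩
    intro b hb
    obtain ⟨i, hi, rfl⟩ := List.mem_iff_getElem.1 hb
    exact get?_to_getElem w i (p - 1) hi hp1lt (hall i hi)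
  · right
    have hq2v : w[q - 2]? = w[p - 1]? := classLow (q - 2) hq2lt (by omega)
    have hq1v : w[q - 1]? = w[p - 2]? := classHigh (q - 1) hq1lt (by omega)
    have hPpal : (w.take (p - 2)).reverse = w.take (p - 2) := by
      apply List.ext_getElem (by rw [List.length_reverse])
      intro n h1 h2
      rw [List.getElem_reverse]
      have hlt : n < p - 2 := by
        have := h2; rwa [List.length_take, min_eq_left (by omega)] at this
      have he : (w.take (p - 2)).length - 1 - n = p - 3 - n := by
        rw [List.length_take]; omega
      simp only [he, List.getElem_take]
      apply get?_to_getElem w (p - 3 - n) n (by omega) (by omega)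
      apply master (p - 3 - n) n (by omega) (by omega)
      have heq : p - 3 - n + n + 3 = p := by omega
      rw [heq]
    have hQpal : (w.drop p).reverse = w.drop p := by
      apply List.ext_getElem (by rw [List.length_reverse])
      intro n h1 h2
      rw [List.getElem_reverse]
      have hlt : n < q - 2 := by
        have := h2; rw [List.length_drop] at this; omega
      have he : (w.drop p).length - 1 - n = q - 3 - n := by
        rw [List.length_drop]; omega
      simp only [he, List.getElem_drop]
      apply get?_to_getElem w (p + (q - 3 - n)) (p + n) (by omega) (by omega)
      apply master (p + (q - 3 - n)) (p + n) (by omega) (by omega)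
      have heq : p + (q - 3 - n) + (p + n) + 3 = p + N := by omega
      rw [heq]
      show (p + N) % N = p % N
      exact Nat.add_mod_right p N
    have e1 : p - 2 + 1 = p - 1 := by omega
    have e2 : p - 2 + 2 = p := by omega
    have e3 : q - 2 + 1 = q - 1 := by omega
    have e4 : q - 2 + 2 = q := by omega
    have fact1 := decomp_lemma w (p - 2) hp2lt (by omega)
    simp only [e1, e2] at fact1
    have fact2 := decomp_lemma w (q - 2) hq2lt (by omega)
    simp only [e3, e4] at fact2
    have link1 : w.take (q - 2) = w.drop p := by
      apply List.ext_getElem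
      · rw [List.length_take, List.length_drop]; omega
      intro n h1 h2
      have hlt : n < q - 2 := by
        have := h1; rwa [List.length_take, min_eq_left (by omega)] at this
      simp only [List.getElem_take, List.getElem_drop]
      apply get?_to_getElem w n (p + n) (by omega) (by omega)
      exact hp.2 n (p + n) (by omega) (by omega) (Nat.add_mod_left p n).symm
    have link2 : w.drop q = w.take (p - 2) := by
      apply List.ext_getElem
      · rw [List.length_take, List.length_drop]; omega
      intro n h1 h2
      have hlt : n < p - 2 := by
        have := h1; rw [List.length_drop] at this; omega
      simp only [List.getElem_take, List.getElem_drop]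
      apply get?_to_getElem w (q + n) n (by omega) (by omega)
      exact hq.2 (q + n) n (by omega) (by omega) (Nat.add_mod_left q n)
    rw [link1, link2] at fact2
    have hbq2 : w[q-2]'hq2lt = w[p-1]'hp1lt := get?_to_getElem w _ _ _ _ hq2v
    have hbq1 : w[q-1]'hq1lt = w[p-2]'hp2lt := get?_to_getElem w _ _ _ _ hq1v
    rw [hbq2, hbq1] at fact2
    have hne : w[p-2]'hp2lt ≠ w[p-1]'hp1lt := by
      intro hc
      exact hbeq (by rw [hgs _ hp2lt, hgs _ hp1lt, hc])
    rcases Bool.eq_false_or_eq_true (w[p-2]'hp2lt) with hb | hb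
    · have hb' : w[p-1]'hp1lt = false := by
        rcases Bool.eq_false_or_eq_true (w[p-1]'hp1lt) with h | h
        · rw [hb, h] at hne; exact absurd rfl hne
        · exact h
      rw [hb, hb'] at fact1 fact2
      exact ⟨w.drop p, w.take (p - 2), hQpal, hPpal, fact2, fact1⟩
    · have hb' : w[p-1]'hp1lt = true := by
        rcases Bool.eq_false_or_eq_true (w[p-1]'hp1lt) with h | h
        · exact h
        · rw [hb, h] at hne; exact absurd rfl hne
      rw [hb, hb'] at fact1 fact2
      exact ⟨w.take (p - 2), w.drop p, hPpal, hQpal, fact1, fact2⟩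


/-- A binary word is central (two coprime periods `p, q` and length `p + q - 2`)
iff it is a power of a single letter or equals `P01Q = Q10P` for palindromes `P, Q`. -/
theorem central_characterization (w : List Bool) :
    (∃ p q : ℕ, Nat.Coprime p q ∧ HasPeriod w p ∧ HasPeriod w q ∧
        w.length = p + q - 2) ↔
      ((∃ (a : Bool) (n : ℕ), w = List.replicate n a) ∨
        ∃ P Q : List Bool, P.reverse = P ∧ Q.reverse = Q ∧
          w = P ++ [false, true] ++ Q ∧ w = Q ++ [true, false] ++ P) := by
  constructor
  · rintro ⟨p, q, hcop, hp, hq, hlen⟩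
    have hp1 := hp.1
    have hq1 := hq.1
    by_cases hP1 : p = 1
    · subst hP1; exact Or.inl (replicate_of_period_one w hp)
    by_cases hQ1 : q = 1
    · subst hQ1; exact Or.inl (replicate_of_period_one w hq)
    exact forward_main w p q (by omega) (by omega) hcop hp hq hlen
  · rintro (⟨a, n, rfl⟩ | ⟨P, Q, hPpal, hQpal, hw1, hw2⟩)
    · refine ⟨1, n + 1, Nat.coprime_one_left _, ⟨one_pos, ?_⟩, ⟨by omega, ?_⟩, ?_⟩
      · intro i j hi hj _
        rw [List.getElem?_eq_getElem hi,
          List.getElem?_eq_getElem hj]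
        simp [List.getElem_replicate]
      · intro i j hi hj hmod
        simp only [List.length_replicate] at hi hj
        have hij : i = j := by
          rwa [Nat.mod_eq_of_lt (by omega), Nat.mod_eq_of_lt (by omega)] at hmod
        rw [hij]
      · simp only [List.length_replicate]; omega
    · set p := P.length + 2 with hpdef
      set q := Q.length + 2 with hqdef
      have hlw : w.length = P.length + Q.length + 2 := by
        rw [hw1]
        simp only [List.length_append, List.length_cons, List.length_nil]
        omega
      have hdropp : w.drop p = Q := by
        rw [hw1]
        have h : (P ++ [false, true]).length = p := by
          simp only [List.length_append, List.length_cons, List.length_nil, hpdef]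
        rw [← h, List.drop_left]
      have htakeq : w.take (q - 2) = Q := by
        rw [hw2]
        have h : q - 2 = Q.length := by omega
        rw [h, List.append_assoc, List.take_left]
      have hdropq : w.drop q = P := by
        rw [hw2]
        have h : (Q ++ [true, false]).length = q := by
          simp only [List.length_append, List.length_cons, List.length_nil, hqdef]
        rw [← h, List.drop_left]
      have htakep : w.take (p - 2) = P := by
        rw [hw1]
        have h : p - 2 = P.length := by omega
        rw [h, List.append_assoc, List.take_left]
      have hpPer : HasPeriod w p := by
        apply hasPeriod_of_step w p (by omega)
        intro i hi
        have h1 : w[i + p]? = Q[i]? := by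
          rw [show i + p = p + i by omega, ← List.getElem?_drop, hdropp]
        have h2 : w[i]? = Q[i]? := by
          have hiQ : i < q - 2 := by omega
          rw [← htakeq, List.getElem?_take_of_lt hiQ]
        rw [h1, h2]
      have hqPer : HasPeriod w q := by
        apply hasPeriod_of_step w q (by omega)
        intro i hi
        have h1 : w[i + q]? = P[i]? := by
          rw [show i + q = q + i by omega, ← List.getElem?_drop, hdropq]
        have h2 : w[i]? = P[i]? := by
          have hiP : i < p - 2 := by omega
          rw [← htakep, List.getElem?_take_of_lt hiP]
        rw [h1, h2]
      have hcop : Nat.Coprime p q := by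
        by_contra hnc
        set d := Nat.gcd p q with hd
        have hdpos : 0 < d := Nat.gcd_pos_of_pos_left _ (by omega)
        have hd1 : d ≠ 1 := hnc
        have hd2 : 2 ≤ d := by omega
        have hdp : d ∣ p := Nat.gcd_dvd_left p q
        have hdq : d ∣ q := Nat.gcd_dvd_right p q
        have hdN : d ∣ p + q := dvd_add hdp hdq
        set N' := (p + q) / d with hN'def
        have hNe : d * N' = p + q := Nat.mul_div_cancel' hdN
        set p' := p / d with hp'def
        have hpe : d * p' = p := Nat.mul_div_cancel' hdp
        have hdlep : d ≤ p := Nat.le_of_dvd (by omega) hdp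
        have hN'2 : 2 ≤ N' := by
          rcases Nat.lt_or_ge N' 2 with h | h
          · interval_cases N' <;> omega
          · exact h
        have hgpN : Nat.gcd p (p + q) = d := by
          rw [Nat.add_comm p q, Nat.gcd_add_self_right]
        have hcop' : Nat.Coprime p' N' := by
          have h := Nat.coprime_div_gcd_div_gcd (m := p) (n := p + q) (by rw [hgpN]; omega)
          rwa [hgpN] at h
        have hvalid : ∀ k, k ≤ N' - 2 → (p - 2 + k * p) % (p + q) < w.length := by
          intro k hk
          have hxlt : (p - 2 + k * p) % (p + q) < p + q := Nat.mod_lt _ (by omega)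
          by_contra hcon
          have e1 : p - 2 + k * p + 2 = (k + 1) * p := by
            have h : ∀ X, p - 2 + X + 2 = X + p := fun X => by omega
            rw [h (k * p)]; ring
          have hxcases : (p - 2 + k * p) % (p + q) = p + q - 1 ∨
              (p - 2 + k * p) % (p + q) = p + q - 2 := by omega
          rcases hxcases with hx | hx
          · have h1 : p - 2 + k * p ≡ p + q - 1 [MOD p + q] :=
              (Nat.mod_modEq _ _).symm.trans (by rw [hx])
            have h1d : p - 2 + k * p ≡ p + q - 1 [MOD d] := Nat.ModEq.of_dvd hdN h1
            have h2 := h1d.add_right 2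
            have e2 : p + q - 1 + 2 = (p + q) + 1 := by omega
            rw [e1, e2] at h2
            have h3 : (0 : ℕ) ≡ (p + q) + 1 [MOD d] :=
              (Nat.modEq_zero_iff_dvd.2 (Dvd.dvd.mul_left hdp (k + 1))).symm.trans h2
            have h4 : (p + q) + 1 ≡ 0 + 1 [MOD d] :=
              (Nat.modEq_zero_iff_dvd.2 hdN).add_right 1
            have h5 : (0 : ℕ) ≡ 1 [MOD d] := h3.trans (by simpa using h4)
            have h6 : d ∣ 1 := Nat.modEq_zero_iff_dvd.1 h5.symm
            have := Nat.le_of_dvd one_pos h6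
            omega
          · have h1 : p - 2 + k * p ≡ p + q - 2 [MOD p + q] :=
              (Nat.mod_modEq _ _).symm.trans (by rw [hx])
            have h2 := h1.add_right 2
            have e2 : p + q - 2 + 2 = p + q := by omega
            rw [e1, e2] at h2
            have h3 : (p + q) ∣ (k + 1) * p := by
              refine Nat.modEq_zero_iff_dvd.1 ?_
              exact h2.trans (Nat.modEq_zero_iff_dvd.2 dvd_rfl)
            have h5 : N' ∣ (k + 1) * p' := by
              rcases h3 with ⟨c, hc⟩
              refine ⟨c, ?_⟩
              apply Nat.eq_of_mul_eq_mul_left (show 0 < d by omega)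
              calc d * ((k + 1) * p') = (k + 1) * (d * p') := by ring
                _ = (k + 1) * p := by rw [hpe]
                _ = (p + q) * c := hc
                _ = (d * N') * c := by rw [hNe]
                _ = d * (N' * c) := by ring
            have h6 : N' ∣ k + 1 := Nat.Coprime.dvd_of_dvd_mul_right hcop'.symm h5
            have := Nat.le_of_dvd (by omega) h6
            omega
        have hchain := chain_lemma_s10 w p q hpPer hqPer (by omega) (p - 2) (N' - 2) hvalid
        have hstart : (p - 2) % (p + q) = p - 2 := Nat.mod_eq_of_lt (by omega)
        have hend : (p - 2 + (N' - 2) * p) % (p + q) = q - 2 := by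
          have key : ∀ X, (p - 2 + X) + (p + 2) = X + 2 * p := fun X => by omega
          have e1 : (p - 2 + (N' - 2) * p) + (p + 2) = N' * p := by
            rw [key]
            have h : N' * p = (N' - 2) * p + 2 * p := by
              have h2 : N' = (N' - 2) + 2 := by omega
              calc N' * p = ((N' - 2) + 2) * p := by rw [← h2]
                _ = (N' - 2) * p + 2 * p := by ring
            omega
          have h1 : (p - 2 + (N' - 2) * p) + (p + 2) ≡ 0 [MOD p + q] := by
            rw [e1]
            refine Nat.modEq_zero_iff_dvd.2 ⟨p', ?_⟩
            rw [← hNe, ← hpe]; ring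
          have h2 : (q - 2) + (p + 2) ≡ 0 [MOD p + q] := by
            have h : (q - 2) + (p + 2) = p + q := by omega
            rw [h]
            exact Nat.modEq_zero_iff_dvd.2 dvd_rfl
          have h3 : p - 2 + (N' - 2) * p ≡ q - 2 [MOD p + q] :=
            Nat.ModEq.add_right_cancel' (p + 2) (h1.trans h2.symm)
          have h4 : (p - 2 + (N' - 2) * p) % (p + q) = (q - 2) % (p + q) := h3
          rwa [Nat.mod_eq_of_lt (show q - 2 < p + q by omega)] at h4
        rw [hstart, hend] at hchain
        have hv1 : w[p - 2]? = some false := by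
          rw [hw1]
          have h : p - 2 = P.length := by omega
          rw [h, List.append_assoc, List.getElem?_append_right (le_refl P.length)]
          simp
        have hv2 : w[q - 2]? = some true := by
          rw [hw2]
          have h : q - 2 = Q.length := by omega
          rw [h, List.append_assoc, List.getElem?_append_right (le_refl Q.length)]
          simp
        rw [hv1, hv2] at hchain
        simp at hchain
      exact ⟨p, q, hcop, hpPer, hqPer, by omega⟩
end

section
/- A binary word w is a strictly bispecial Sturmian word (i.e., 0w0, 0w1, 1w0, and 1w1 are all balanced) if and only if w is a central word. -/
/-! ### List helpers -/

lemma infix_drop_take {α : Type*} (l : List α) (s k : ℕ) : (l.drop s).take k <:+: l := by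
  refine ⟨l.take s, (l.drop s).drop k, ?_⟩
  rw [List.append_assoc, List.take_append_drop, List.take_append_drop]

lemma count_take_add (X : List Bool) (s k : ℕ) :
    (X.take (s+k)).count true = (X.take s).count true + ((X.drop s).take k).count true := by
  rw [List.take_add, List.count_append]

lemma exists_start_of_infix {u X : List Bool} (h : u <:+: X) :
    ∃ s, s + u.length ≤ X.length ∧
      (X.take s).count true + u.count true = (X.take (s + u.length)).count true := by
  obtain ⟨x, y, hxy⟩ := h
  refine ⟨x.length, ?_, ?_⟩
  · rw [← hxy]; simp
  · have h1 : X.take x.length = x := by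
      rw [← hxy, List.append_assoc, List.take_left]
    have h2 : X.take (x.length + u.length) = x ++ u := by
      have hX : X = (x ++ u) ++ y := by rw [← hxy]
      have hlen : (x ++ u).length = x.length + u.length := by simp
      rw [hX, ← hlen, List.take_left]
    rw [h1, h2, List.count_append]

lemma count_true_map_not (l : List Bool) : (l.map not).count true + l.count true = l.length := by
  induction l with
  | nil => simp
  | cons a t ih => cases a <;> simp [List.count_cons] <;> omega

lemma isBalanced_map_not {X : List Bool} (h : IsBalanced X) : IsBalanced (X.map not) := by
  intro u v hu hv hl
  obtain ⟨x, y, hxy⟩ := hu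
  obtain ⟨x', y', hxy'⟩ := hv
  have hnn : (not ∘ not) = (id : Bool → Bool) := funext fun b => Bool.not_not b
  have hu' : u.map not <:+: X := by
    refine ⟨x.map not, y.map not, ?_⟩
    have := congrArg (List.map not) hxy
    simpa [List.map_map, hnn] using this
  have hv' : v.map not <:+: X := by
    refine ⟨x'.map not, y'.map not, ?_⟩
    have := congrArg (List.map not) hxy'
    simpa [List.map_map, hnn] using this
  have hl' : (u.map not).length = (v.map not).length := by simpa using hl
  have hb := h _ _ hu' hv' hl'
  have c1 : (u.map not).count true + u.count true = u.length := count_true_map_not u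
  have c2 : (v.map not).count true + v.count true = v.length := count_true_map_not v
  rw [abs_le] at hb ⊢
  constructor <;> push_cast <;> omega
/-! ### Arithmetic helpers -/

lemma mod_add_lt_iff (A u n : ℕ) (hn : 0 < n) (hu : u < n) :
    ((A + u) % n < u) ↔ (n ≤ A % n + u) := by
  have hA : A % n < n := Nat.mod_lt _ hn
  have h1 : (A + u) % n = (A % n + u) % n := by
    conv_lhs => rw [Nat.add_mod, Nat.mod_eq_of_lt hu]
  by_cases hc : n ≤ A % n + u
  · have h2 : (A % n + u) % n = A % n + u - n := by
      rw [Nat.mod_eq_sub_mod hc, Nat.mod_eq_of_lt (by omega)]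
    rw [h1, h2]; omega
  · have h2 : (A % n + u) % n = A % n + u := Nat.mod_eq_of_lt (by omega)
    rw [h1, h2]; omega

lemma div_add_step (A u n : ℕ) (hn : 0 < n) (hu : u < n) :
    (A + u) / n = A / n + (if (A + u) % n < u then 1 else 0) := by
  have h := Nat.add_div (a := A) (b := u) hn
  have h2 : u / n = 0 := Nat.div_eq_of_lt hu
  have h3 : u % n = u := Nat.mod_eq_of_lt hu
  have hit : (if (A + u) % n < u then 1 else 0) = (if n ≤ A % n + u then 1 else 0) := by
    simp only [mod_add_lt_iff A u n hn hu]
  rw [h, h2, h3, hit]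
  ring

lemma phi_super (x y u n : ℕ) (hn : 0 < n) :
    x * u / n + y * u / n ≤ (x + y) * u / n ∧
      (x + y) * u / n ≤ x * u / n + y * u / n + 1 := by
  have h : (x + y) * u = x * u + y * u := by ring
  rw [h, Nat.add_div hn]
  constructor
  · split <;> omega
  · split <;> omega

lemma mod_compl {x r n : ℕ} (hn : 0 < n) (hx : (x + r) % n = 0) (hr : r % n ≠ 0) :
    x % n + r % n = n := by
  have h1 : (x % n + r % n) % n = 0 := by rwa [← Nat.add_mod]
  have hxl : x % n < n := Nat.mod_lt _ hn
  have hrl : r % n < n := Nat.mod_lt _ hn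
  have h2 : x % n + r % n = n * ((x % n + r % n) / n) + 0 := by
    rw [← h1]; exact (Nat.div_add_mod _ n).symm
  have h3 : (x % n + r % n) / n < 2 := by
    rw [Nat.div_lt_iff_lt_mul hn]; omega
  set e := (x % n + r % n) / n with he
  interval_cases e <;> omega

lemma phi_compl (u n k : ℕ) (hn : 0 < n) (hco : Nat.Coprime u n)
    (h0 : 0 < k) (h1 : k < n) :
    k * u / n + (n - k) * u / n + 1 = u := by
  have hsum : k * u + (n - k) * u = n * u := by
    have : k + (n - k) = n := by omega
    calc k * u + (n - k) * u = (k + (n - k)) * u := by ring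
    _ = n * u := by rw [this]
  have hr : (k * u) % n ≠ 0 := by
    intro hz
    have hdvd : n ∣ k * u := Nat.dvd_of_mod_eq_zero hz
    have : n ∣ k := (Nat.Coprime.dvd_of_dvd_mul_right (by exact hco.symm) hdvd)
    have := Nat.le_of_dvd h0 this
    omega
  have hmod : ((n - k) * u) % n + (k * u) % n = n := by
    apply mod_compl hn _ hr
    rw [show (n - k) * u + k * u = n * u by rw [add_comm]; exact hsum]
    exact Nat.mul_mod_right n u
  have hdiv := Nat.add_div (a := k * u) (b := (n - k) * u) hn
  rw [hsum] at hdiv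
  rw [Nat.mul_div_cancel_left u hn] at hdiv
  rw [if_pos (by omega)] at hdiv
  omega
/-! ### Balance from the mechanical formula -/

lemma bal (w : List Bool) (n u : ℕ) (a b : Bool)
    (hn : n = w.length + 2) (hu1 : 1 ≤ u) (hun : u < n) (hco : Nat.Coprime u n)
    (hw : ∀ i (h : i < w.length), w[i] = decide ((((i+2)*u) % n) < u)) :
    IsBalanced ([a] ++ w ++ [b]) := by
  have hn0 : 0 < n := by omega
  have hn2 : 2 ≤ n := by omega
  set X := [a] ++ w ++ [b] with hXdef
  have hX : X.length = n := by simp [hXdef, hn]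
  set A : ℕ := cond a 1 0 with hA
  set B : ℕ := cond b 1 0 with hB
  set Ca : ℕ → ℕ :=
    (fun m => (if 1 ≤ m then A else 0) + (min m (n-1)) * u / n + (if n ≤ m then B else 0))
    with hCa
  have hA1 : A ≤ 1 := by cases a <;> simp [hA]
  have hB1 : B ≤ 1 := by cases b <;> simp [hB]
  have hdiv1 : 1 * u / n = 0 := by rw [one_mul]; exact Nat.div_eq_of_lt hun
  have hφn1 : (n-1) * u / n + 1 = u := by
    have hc := phi_compl u n 1 hn0 hco (by omega) (by omega)
    omega
  -- evaluation of Ca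
  have CaEval0 : Ca 0 = 0 := by
    simp only [hCa]
    rw [if_neg (by omega), if_neg (by omega), min_eq_left (by omega)]
    simp
  have CaEvalMid : ∀ m, 1 ≤ m → m ≤ n-1 → Ca m = A + m * u / n := by
    intro m h1 h2
    simp only [hCa]
    rw [if_pos h1, if_neg (by omega), min_eq_left (by omega)]
    omega
  have CaEvalN : Ca n = A + (n-1) * u / n + B := by
    simp only [hCa]
    rw [if_pos (by omega), if_pos (by omega), min_eq_right (by omega)]
  -- letters of X
  have hget0 : ∀ (h : 0 < X.length), X[0] = a := by
    intro h; simp [hXdef]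
  have hgetlast : ∀ (h : n-1 < X.length), X[n-1] = b := by
    intro h
    simp only [hXdef]
    rw [List.getElem_append_right (by simp; omega)]
    simp
  have hgetmid : ∀ m (h1 : 1 ≤ m) (h2 : m ≤ n-2) (h : m < X.length),
      X[m] = decide ((((m+1)*u) % n) < u) := by
    intro m h1 h2 h
    obtain ⟨m', rfl⟩ : ∃ m', m = m'+1 := ⟨m-1, by omega⟩
    have hm' : m' < w.length := by omega
    have hx : X[m'+1] = w[m'] := by
      simp only [hXdef]
      rw [List.getElem_append_left (by simp; omega)]
      simp
    rw [hx, hw m' hm']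
  -- prefix counts
  have hcnt : ∀ m, m ≤ n → (X.take m).count true = Ca m := by
    intro m
    induction m with
    | zero => intro _; simp [CaEval0]
    | succ m ih =>
      intro hm1
      have hmn : m < n := by omega
      have ihm := ih (by omega)
      have hms : m < X.length := by omega
      rw [List.take_succ, List.count_append, List.getElem?_eq_getElem hms, ihm]
      have hcount : ((some (X[m]'hms)).toList.count true) = (if X[m]'hms = true then 1 else 0) := by
        cases hxx : X[m]'hms <;> simp
      rw [hcount]
      rcases Nat.eq_zero_or_pos m with hm0 | hmpos
      · subst hm0
        rw [hget0 hms, CaEval0, CaEvalMid 1 (by omega) (by omega), hdiv1]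
        cases a <;> simp [hA]
      · rcases Nat.lt_or_ge m (n-1) with hmid | hlast
        · -- middle letter
          rw [hgetmid m hmpos (by omega) hms]
          rw [CaEvalMid m (by omega) (by omega), CaEvalMid (m+1) (by omega) (by omega)]
          have hstep : (m+1) * u / n = m * u / n + (if ((m+1)*u) % n < u then 1 else 0) := by
            have h := div_add_step (m*u) u n hn0 hun
            have he : m*u + u = (m+1)*u := by ring
            rw [he] at h
            exact h
          by_cases hc : ((m+1)*u) % n < u
          · simp [hc, hstep]; omega
          · simp [hc, hstep]
        · -- last letter: m = n-1
          have hmeq : m = n-1 := by omega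
          subst hmeq
          rw [hgetlast hms]
          rw [CaEvalMid (n-1) (by omega) (by omega), show n - 1 + 1 = n by omega, CaEvalN]
          cases b <;> simp [hB]
  -- two-sided bounds on factor counts
  have key : ∀ s k, 1 ≤ k → k ≤ n-1 → s + k ≤ n →
      Ca s + k * u / n ≤ Ca (s+k) ∧ Ca (s+k) ≤ Ca s + k * u / n + 1 := by
    intro s k hk1 hk2 hsk
    rcases Nat.eq_zero_or_pos s with hs0 | hspos
    · subst hs0
      simp only [Nat.zero_add]
      rw [CaEval0, CaEvalMid k (by omega) (by omega)]
      omega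
    · rcases Nat.lt_or_ge (s+k) n with hless | hgeq
      · rw [CaEvalMid s (by omega) (by omega), CaEvalMid (s+k) (by omega) (by omega)]
        have := phi_super s k u n hn0
        omega
      · have hskn : s + k = n := by omega
        rw [CaEvalMid s (by omega) (by omega), hskn, CaEvalN]
        have hcmp : k * u / n + (n-k) * u / n + 1 = u :=
          phi_compl u n k hn0 hco (by omega) (by omega)
        have hs : s = n - k := by omega
        rw [hs]
        omega
  -- conclude balance
  intro f1 f2 h1 h2 hlen
  set k := f1.length with hk
  rcases Nat.eq_zero_or_pos k with hk0 | hkpos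
  · have e1 : f1 = [] := List.length_eq_zero_iff.mp (by omega)
    have e2 : f2 = [] := List.length_eq_zero_iff.mp (by omega)
    subst e1; subst e2; simp
  rcases Nat.lt_or_ge k n with hkn | hkbig
  · obtain ⟨s1, hs1, hc1⟩ := exists_start_of_infix h1
    obtain ⟨s2, hs2, hc2⟩ := exists_start_of_infix h2
    rw [hX] at hs1 hs2
    rw [← hlen] at hs2 hc2
    rw [hcnt s1 (by omega), hcnt (s1 + k) (by omega)] at hc1
    rw [hcnt s2 (by omega), hcnt (s2 + k) (by omega)] at hc2
    have b1 := key s1 k hkpos (by omega) (by omega)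
    have b2 := key s2 k hkpos (by omega) (by omega)
    rw [abs_le]
    constructor <;> push_cast <;> omega
  · -- k = n : both factors are all of X
    have hkn : k = n := by
      have := h1.length_le
      rw [hX] at this; omega
    have e1 : f1 = X := h1.eq_of_length (by omega)
    have e2 : f2 = X := h2.eq_of_length (by omega)
    rw [e1, e2]
    simp
/-! ### The mechanical formula from coprime periods -/

lemma form (w : List Bool) (p q : ℕ) (hp : HasPeriod w p) (hq : HasPeriod w q)
    (hco : Nat.Coprime p q) (hlen : w.length = p + q - 2) :
    ∃ u, 1 ≤ u ∧ u < w.length + 2 ∧ Nat.Coprime u (w.length + 2) ∧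
      ((∀ i (h : i < w.length), w[i] = decide ((((i+2)*u) % (w.length+2)) < u)) ∨
       (∀ i (h : i < w.length), (!w[i]) = decide ((((i+2)*u) % (w.length+2)) < u))) := by
  have hp1 : 1 ≤ p := hp.1
  have hq1 : 1 ≤ q := hq.1
  set L := w.length with hLdef
  set n := L + 2 with hn
  have hpq : p + q = n := by omega
  have hn2 : 2 ≤ n := by omega
  have hn0 : 0 < n := by omega
  by_cases hcst : ∀ i (hi : i < L) j (hj : j < L), w[i] = w[j]
  · refine ⟨1, le_refl 1, by omega, Nat.coprime_one_left n, ?_⟩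
    have hform : ∀ i (h : i < L), decide ((((i+2)*1) % n) < 1) = false := by
      intro i h
      have h1 : (i+2) * 1 = i + 2 := by ring
      have h2 : (i+2) % n = i+2 := Nat.mod_eq_of_lt (by omega)
      rw [h1]
      simp [h2]
    rcases Nat.eq_zero_or_pos L with hL0 | hLpos
    · left; intro i h; exact absurd h (by omega)
    · cases hw0 : w[0]'(by omega) with
      | false =>
        left; intro i h
        rw [hform i h, hcst i h 0 (by omega), hw0]
      | true =>
        right; intro i h
        rw [hform i h, hcst i h 0 (by omega), hw0]
        rfl
  · push_neg at hcst
    obtain ⟨i0, hi0, j0, hj0, hne⟩ := hcst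
    have hcopn : Nat.Coprime p n := by
      have h1 : Nat.Coprime p (q + p) := (Nat.coprime_add_self_right).mpr hco
      rwa [show q + p = n by omega] at h1
    haveI : NeZero n := ⟨by omega⟩
    set U : ZMod n := (((ZMod.unitOfCoprime p hcopn)⁻¹ : (ZMod n)ˣ) : ZMod n) with hUdef
    set u := U.val with hudef
    have hpu : p * u ≡ 1 [MOD n] := by
      have h1 : ((p : ZMod n)) * U = 1 := by
        rw [hUdef, ← ZMod.coe_unitOfCoprime p hcopn, ← Units.val_mul]
        simp
      have h2 : ((p * u : ℕ) : ZMod n) = ((1:ℕ) : ZMod n) := by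
        push_cast
        first
        | (rw [hudef, ZMod.natCast_rightInverse U]; exact h1)
        | (rw [ZMod.natCast_rightInverse U]; exact h1)
        | exact h1
        | simp only [hudef, ZMod.natCast_rightInverse U]; exact h1
      exact (ZMod.natCast_eq_natCast_iff _ _ _).mp h2
    have h1n : (1:ℕ) % n = 1 := Nat.mod_eq_of_lt (by omega)
    have hpumod : (p * u) % n = 1 := by
      have h := hpu
      rwa [Nat.ModEq, h1n] at h
    have hu1 : 1 ≤ u := by
      rcases Nat.eq_zero_or_pos u with h0 | h
      · rw [h0, Nat.mul_zero] at hpumod; simp at hpumod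
      · exact h
    have hun : u < n := ZMod.val_lt U
    have hcoun : Nat.Coprime u n := by
      have hd : Nat.gcd u n ∣ 1 := by
        have h₁ : Nat.gcd u n ∣ p * u := Dvd.dvd.mul_left (Nat.gcd_dvd_left u n) p
        have h₂ : Nat.gcd u n ∣ n * ((p*u)/n) := Dvd.dvd.mul_right (Nat.gcd_dvd_right u n) _
        have h₃ := Nat.div_add_mod (p*u) n
        rw [hpumod] at h₃
        have h₄ : p * u - n * ((p*u)/n) = 1 := by omega
        rw [← h₄]; exact Nat.dvd_sub h₁ h₂
      exact Nat.dvd_one.mp hd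
    have hupmod : (u * p) % n = 1 := by rwa [Nat.mul_comm] at hpumod
    -- letter function
    set f : ℕ → Bool := fun i => w[i]?.getD false with hf
    have hfi : ∀ i (h : i < L), f i = w[i] := by
      intro i h
      simp only [hf]
      rw [List.getElem?_eq_getElem h]
      simp
    have hPp : ∀ i, i + p < L → f i = f (i + p) := by
      intro i hip
      have h2 := hp.2 i (i+p) (by omega) (by omega) (Nat.add_mod_right i p).symm
      simp only [hf]; rw [h2]
    have hPq : ∀ i, i + q < L → f i = f (i + q) := by
      intro i hiq
      have h2 := hq.2 i (i+q) (by omega) (by omega) (Nat.add_mod_right i q).symm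
      simp only [hf]; rw [h2]
    -- valid positions
    have hVP : ∀ t, 1 ≤ t → t ≤ n-1 → t ≠ n - u → 1 ≤ (t*p) % n ∧ (t*p) % n ≤ n-2 := by
      intro t h1 h2 h3
      have hlt : (t*p) % n < n := Nat.mod_lt _ (by omega)
      constructor
      · rcases Nat.eq_zero_or_pos ((t*p) % n) with h0 | h
        · exfalso
          have hdvd : n ∣ t * p := Nat.dvd_of_mod_eq_zero h0
          have hnt : n ∣ t := Nat.Coprime.dvd_of_dvd_mul_right hcopn.symm hdvd
          have := Nat.le_of_dvd (by omega) hnt; omega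
        · exact h
      · by_contra hcon
        push_neg at hcon
        have heq : (t*p) % n = n-1 := by omega
        have h4 : t * p ≡ n-1 [MOD n] := by
          rw [Nat.ModEq, heq, Nat.mod_eq_of_lt (by omega)]
        have h6 : t * p * u ≡ t [MOD n] := by
          rw [show t * p * u = t * (p * u) by ring]
          calc t * (p*u) ≡ t * 1 [MOD n] := Nat.ModEq.mul_left t hpu
          _ = t := by ring
        have h7 : t ≡ (n-1) * u [MOD n] := h6.symm.trans (h4.mul_right u)
        have h8 : ((n-1) * u) % n = n - u := by
          have hexp : (n-1)*u + u = n*u := by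
            have hle : 1*u ≤ n*u := Nat.mul_le_mul_right u (by omega)
            rw [Nat.sub_mul]; omega
          have hexp2 : n * (u-1) + n = n * u := by
            have h5 : u - 1 + 1 = u := by omega
            calc n*(u-1) + n = n*((u-1)+1) := by ring
            _ = n*u := by rw [h5]
          have hstep : (n-1) * u = n * (u-1) + (n-u) := by omega
          rw [hstep, Nat.mul_add_mod, Nat.mod_eq_of_lt (by omega)]
        have h9 : t = n - u := by
          have ht : t % n = t := Nat.mod_eq_of_lt (by omega)
          have h := h7
          rw [Nat.ModEq, ht, h8] at h
          exact h
        exact h3 h9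
    -- single step
    have hSL : ∀ t, 1 ≤ t → t + 1 ≤ n-1 → t ≠ n-u → t+1 ≠ n-u →
        f ((t*p) % n - 1) = f (((t+1)*p) % n - 1) := by
      intro t h1 h2 h3 h4
      obtain ⟨hr1, hr2⟩ := hVP t h1 (by omega) h3
      obtain ⟨hr1', hr2'⟩ := hVP (t+1) (by omega) h2 h4
      have hrel : ((t+1)*p) % n = ((t*p) % n + p) % n := by
        conv_lhs => rw [show (t+1)*p = t*p + p by ring]
        rw [Nat.add_mod, Nat.mod_eq_of_lt (show p < n by omega)]
      set r := (t*p) % n with hr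
      set r' := ((t+1)*p) % n with hr'
      rcases Nat.lt_or_ge (r + p) n with hc | hc
      · have heq : r' = r + p := by rw [hrel, Nat.mod_eq_of_lt hc]
        have hstep := hPp (r-1) (by omega)
        rw [show r - 1 + p = r' - 1 by omega] at hstep
        exact hstep
      · have heq : r' = r + p - n := by
          rw [hrel, Nat.mod_eq_sub_mod hc, Nat.mod_eq_of_lt (by omega)]
        have hrq : r = r' + q := by omega
        have hstep := hPq (r'-1) (by omega)
        rw [show r' - 1 + q = r - 1 by omega] at hstep
        exact hstep.symm
    -- chains along an arc
    have hCH : ∀ lo hi, 1 ≤ lo → hi ≤ n-1 → (n - u < lo ∨ hi < n - u) →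
        ∀ d t, lo ≤ t → t + d ≤ hi → f ((t*p) % n - 1) = f (((t+d)*p) % n - 1) := by
      intro lo hi hlo hhi harcs d
      induction d with
      | zero => intro t _ _; rfl
      | succ d ih =>
        intro t hlot hhit
        have h1 := ih t hlot (by omega)
        have h2 := hSL (t+d) (by omega) (by omega)
          (by rcases harcs with h|h <;> omega) (by rcases harcs with h|h <;> omega)
        rw [show t+d+1 = t+(d+1) by omega] at h2
        exact h1.trans h2
    -- discrete logarithm facts
    have hL3 : ∀ i, i < L → (1 ≤ ((i+1)*u) % n ∧ ((i+1)*u) % n ≤ n-1 ∧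
        ((i+1)*u) % n ≠ n - u ∧ ((((i+1)*u) % n) * p) % n = i+1) := by
      intro i hiL
      have hlt : ((i+1)*u) % n < n := Nat.mod_lt _ (by omega)
      have hnz : 1 ≤ ((i+1)*u) % n := by
        rcases Nat.eq_zero_or_pos (((i+1)*u) % n) with h0 | h
        · exfalso
          have hdvd : n ∣ (i+1) * u := Nat.dvd_of_mod_eq_zero h0
          have hni : n ∣ (i+1) := Nat.Coprime.dvd_of_dvd_mul_right hcoun.symm hdvd
          have := Nat.le_of_dvd (by omega) hni; omega
        · exact h
      have hpos : ((((i+1)*u) % n) * p) % n = i+1 := by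
        have hc1 : (((i+1)*u) % n) * p ≡ (i+1)*u*p [MOD n] :=
          (Nat.mod_modEq ((i+1)*u) n).mul_right p
        have hc2 : (i+1)*u*p ≡ i+1 [MOD n] := by
          rw [show (i+1)*u*p = (i+1)*(u*p) by ring]
          calc (i+1)*(u*p) ≡ (i+1)*1 [MOD n] := by
                refine Nat.ModEq.mul_left (i+1) ?_
                rw [Nat.ModEq, hupmod, h1n]
          _ = i+1 := by ring
        have hc3 := hc1.trans hc2
        rw [Nat.ModEq] at hc3
        rw [Nat.mod_eq_of_lt (show i+1 < n by omega)] at hc3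
        exact hc3
      have hnk0 : ((i+1)*u) % n ≠ n - u := by
        intro hcon
        have h4 : (i+1) * u ≡ n - u [MOD n] := by
          rw [Nat.ModEq, hcon, Nat.mod_eq_of_lt (by omega)]
        have h6 : (i+1) * u * p ≡ i+1 [MOD n] := by
          rw [show (i+1)*u*p = (i+1)*(u*p) by ring]
          calc (i+1)*(u*p) ≡ (i+1)*1 [MOD n] := by
                refine Nat.ModEq.mul_left (i+1) ?_
                rw [Nat.ModEq, hupmod, h1n]
          _ = i+1 := by ring
        have h7 : i+1 ≡ (n-u) * p [MOD n] := h6.symm.trans (h4.mul_right p)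
        have h8 : ((n-u) * p) % n = n - 1 := by
          have hz : ((n-u)*p + u*p) % n = 0 := by
            rw [show (n-u)*p + u*p = n*p by
              have hle : 1*p ≤ n*p := Nat.mul_le_mul_right p (by omega)
              have h5 : u*p ≤ n*p := Nat.mul_le_mul_right p (by omega)
              rw [Nat.sub_mul]; omega]
            exact Nat.mul_mod_right n p
          have hrnz : (u*p) % n ≠ 0 := by rw [hupmod]; omega
          have := mod_compl hn0 hz hrnz
          rw [hupmod] at this
          have hlt2 : ((n-u)*p) % n < n := Nat.mod_lt _ (by omega)
          omega
        have h9 : i + 1 = n - 1 := by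
          have h := h7
          rw [Nat.ModEq, h8, Nat.mod_eq_of_lt (by omega)] at h
          exact h
        omega
      exact ⟨hnz, by omega, hnk0, hpos⟩
    -- the "high arc" characterization
    have hhi_iff : ∀ i, i < L → ((((i+2)*u) % n < u) ↔ n - u < ((i+1)*u) % n) := by
      intro i hiL
      obtain ⟨l1, l2, l3, _⟩ := hL3 i hiL
      have hz : ((i+2)*u) % n = (((i+1)*u) % n + u) % n := by
        conv_lhs => rw [show (i+2)*u = (i+1)*u + u by ring]
        rw [Nat.add_mod, Nat.mod_eq_of_lt hun]
      rcases Nat.lt_trichotomy (((i+1)*u) % n) (n-u) with h | h | h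
      · have heq : (((i+1)*u) % n + u) % n = ((i+1)*u) % n + u := Nat.mod_eq_of_lt (by omega)
        rw [hz, heq]; omega
      · exact absurd h l3
      · have heq : (((i+1)*u) % n + u) % n = ((i+1)*u) % n + u - n := by
          rw [Nat.mod_eq_sub_mod (by omega), Nat.mod_eq_of_lt (by omega)]
        rw [hz, heq]; omega
    -- equal letters on the same arc
    have harc : ∀ i (hi : i < L) j (hj : j < L),
        ((((i+2)*u) % n < u) ↔ (((j+2)*u) % n < u)) → f i = f j := by
      intro i hi j hj hiff
      obtain ⟨li1, li2, li3, li4⟩ := hL3 i hi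
      obtain ⟨lj1, lj2, lj3, lj4⟩ := hL3 j hj
      rw [hhi_iff i hi, hhi_iff j hj] at hiff
      have hfi' : f ((((i+1)*u % n)*p) % n - 1) = f i := by
        rw [li4, Nat.add_sub_cancel]
      have hfj' : f ((((j+1)*u % n)*p) % n - 1) = f j := by
        rw [lj4, Nat.add_sub_cancel]
      by_cases hside : n - u < (i+1)*u % n
      · have hside' : n - u < (j+1)*u % n := hiff.mp hside
        rcases Nat.le_total ((i+1)*u % n) ((j+1)*u % n) with hij | hij
        · have hch := hCH (n-u+1) (n-1) (by omega) (by omega) (Or.inl (by omega))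
            ((j+1)*u % n - (i+1)*u % n) ((i+1)*u % n) (by omega) (by omega)
          rw [show (i+1)*u % n + ((j+1)*u % n - (i+1)*u % n) = (j+1)*u % n by omega] at hch
          rw [← hfi', ← hfj', hch]
        · have hch := hCH (n-u+1) (n-1) (by omega) (by omega) (Or.inl (by omega))
            ((i+1)*u % n - (j+1)*u % n) ((j+1)*u % n) (by omega) (by omega)
          rw [show (j+1)*u % n + ((i+1)*u % n - (j+1)*u % n) = (i+1)*u % n by omega] at hch
          rw [← hfi', ← hfj', hch]
      · have hside' : ¬ (n - u < (j+1)*u % n) := fun hh => hside (hiff.mpr hh)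
        rcases Nat.le_total ((i+1)*u % n) ((j+1)*u % n) with hij | hij
        · have hch := hCH 1 (n-u-1) (by omega) (by omega) (Or.inr (by omega))
            ((j+1)*u % n - (i+1)*u % n) ((i+1)*u % n) (by omega) (by omega)
          rw [show (i+1)*u % n + ((j+1)*u % n - (i+1)*u % n) = (j+1)*u % n by omega] at hch
          rw [← hfi', ← hfj', hch]
        · have hch := hCH 1 (n-u-1) (by omega) (by omega) (Or.inr (by omega))
            ((i+1)*u % n - (j+1)*u % n) ((j+1)*u % n) (by omega) (by omega)
          rw [show (j+1)*u % n + ((i+1)*u % n - (j+1)*u % n) = (i+1)*u % n by omega] at hch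
          rw [← hfi', ← hfj', hch]
    -- assemble
    refine ⟨u, hu1, hun, hcoun, ?_⟩
    have hfne : f i0 ≠ f j0 := by
      rw [hfi i0 hi0, hfi j0 hj0]; exact hne
    have hne' : ¬ ((((i0+2)*u) % n < u) ↔ (((j0+2)*u) % n < u)) := by
      intro hcon
      exact hfne (harc i0 hi0 j0 hj0 hcon)
    suffices hmain : ∀ ih jl (hihL : ih < L) (hjlL : jl < L),
        (((ih+2)*u) % n < u) → ¬(((jl+2)*u) % n < u) → f ih ≠ f jl →
        ((∀ i (h : i < L), w[i] = decide ((((i+2)*u) % n) < u)) ∨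
         (∀ i (h : i < L), (!w[i]) = decide ((((i+2)*u) % n) < u))) by
      by_cases hh : ((i0+2)*u) % n < u
      · have hh2 : ¬ ((j0+2)*u) % n < u := by tauto
        exact hmain i0 j0 hi0 hj0 hh hh2 hfne
      · have hh2 : ((j0+2)*u) % n < u := by tauto
        exact hmain j0 i0 hj0 hi0 hh2 hh hfne.symm
    intro ihp jlp hihL hjlL hhih hhjl hval
    have hall : ∀ i (hi : i < L), f i = (if ((i+2)*u) % n < u then f ihp else f jlp) := by
      intro i hi
      by_cases hc : ((i+2)*u) % n < u
      · rw [if_pos hc]; exact harc i hi ihp hihL (by tauto)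
      · rw [if_neg hc]; exact harc i hi jlp hjlL (by tauto)
    cases hfh : f ihp with
    | true =>
      left
      intro i hi
      have hfl : f jlp = false := by
        cases hjl2 : f jlp
        · rfl
        · exact absurd (hfh.trans hjl2.symm) hval
      rw [← hfi i hi, hall i hi, hfh, hfl]
      by_cases hc : ((i+2)*u) % n < u <;> simp [hc]
    | false =>
      right
      intro i hi
      have hfl : f jlp = true := by
        cases hjl2 : f jlp
        · exact absurd (hfh.trans hjl2.symm) hval
        · rfl
      rw [← hfi i hi, hall i hi, hfh, hfl]
      by_cases hc : ((i+2)*u) % n < u <;> simp [hc]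
/-! ### Easy direction -/

lemma map_not_map_not (l : List Bool) : (l.map not).map not = l := by
  rw [List.map_map]
  have h : (not ∘ not) = (id : Bool → Bool) := funext fun b => Bool.not_not b
  rw [h, List.map_id]

lemma easy (w : List Bool) (p q : ℕ) (hco : Nat.Coprime p q)
    (hp : HasPeriod w p) (hq : HasPeriod w q) (hlen : w.length = p + q - 2) :
    ∀ a b : Bool, IsBalanced ([a] ++ w ++ [b]) := by
  obtain ⟨u, hu1, hun, hcoun, hbr⟩ := form w p q hp hq hco hlen
  intro a b
  rcases hbr with hbr | hbr
  · exact bal w (w.length+2) u a b rfl hu1 hun hcoun hbr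
  · have hlen2 : w.length + 2 = (w.map not).length + 2 := by simp
    have hb2 : IsBalanced ([!a] ++ w.map not ++ [!b]) := by
      refine bal (w.map not) (w.length+2) u (!a) (!b) hlen2 hu1 hun hcoun ?_
      intro i hi
      have hi' : i < w.length := by simpa using hi
      rw [List.getElem_map]
      exact hbr i hi'
    have hb3 := isBalanced_map_not hb2
    have he : ([!a] ++ w.map not ++ [!b]).map not = [a] ++ w ++ [b] := by
      have h : (not ∘ not) = (id : Bool → Bool) := funext fun b => Bool.not_not b
      simp [List.map_map, h]
    rwa [he] at hb3
/-! ### Hard direction -/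

lemma hard (w : List Bool)
    (hWbal : IsBalanced ([false] ++ w ++ [true]))
    (hVbal : IsBalanced ([true] ++ w ++ [false])) :
    ∃ p q : ℕ, Nat.Coprime p q ∧ HasPeriod w p ∧ HasPeriod w q ∧ w.length = p + q - 2 := by
  classical
  set L := w.length with hLdef
  set n := L + 2 with hndef
  have hn2 : 2 ≤ n := by omega
  have hn0 : 0 < n := by omega
  set W : List Bool := [false] ++ w ++ [true] with hWdef
  set V : List Bool := [true] ++ w ++ [false] with hVdef
  have hWlen : W.length = n := by simp [hWdef, hndef, hLdef]
  have hVlen : V.length = n := by simp [hVdef, hndef, hLdef]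
  set oc : ℕ := w.count true + 1 with hocdef
  have hWcount : W.count true = oc := by
    simp [hWdef, hocdef, List.count_append]
  have hVcount : V.count true = oc := by
    simp [hVdef, hocdef, List.count_append]
  have hoc1 : 1 ≤ oc := by omega
  have hocn : oc ≤ n - 1 := by
    have hcl : w.count true ≤ w.length := List.count_le_length
    omega
  set g : ℕ → ℕ := fun m => (W.take m).count true with hgdef
  have hg0 : g 0 = 0 := by simp [hgdef]
  have hg1 : g 1 = 0 := by
    have he : W.take 1 = [false] := by simp [hWdef]
    simp only [hgdef]
    rw [he]
    simp
  have hgn : g n = oc := by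
    simp only [hgdef]
    rw [show W.take n = W from by rw [← hWlen]; exact List.take_length]
    exact hWcount
  have hgmono : ∀ m m', m ≤ m' → g m ≤ g m' := by
    intro m m' hmm
    have e := count_take_add W m (m' - m)
    rw [show m + (m' - m) = m' by omega] at e
    simp only [hgdef]
    omega
  have hgle : ∀ m, g m ≤ oc := by
    intro m
    simp only [hgdef]
    rw [← hWcount]
    exact (List.take_sublist m W).count_le true
  have hwin : ∀ s k, ((W.drop s).take k).count true + g s = g (s + k) := by
    intro s k
    have e := count_take_add W s k
    simp only [hgdef]
    omega
  -- pairwise window bound from balance of W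
  have hWb : ∀ s1 s2 k, s1 + k ≤ n → s2 + k ≤ n →
      g (s1+k) + g s2 ≤ g s1 + g (s2+k) + 1 := by
    intro s1 s2 k h1 h2
    have hlen : ((W.drop s1).take k).length = ((W.drop s2).take k).length := by
      simp only [List.length_take, List.length_drop, hWlen]
      omega
    have hb := hWbal ((W.drop s1).take k) ((W.drop s2).take k)
      (infix_drop_take W s1 k) (infix_drop_take W s2 k) hlen
    have e1 := hwin s1 k
    have e2 := hwin s2 k
    rw [abs_le] at hb
    omega
  -- V prefix counts
  have hVtake : ∀ m, 1 ≤ m → m ≤ n-1 → (V.take m).count true = g m + 1 := by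
    intro m h1 h2
    obtain ⟨m', rfl⟩ : ∃ m', m = m'+1 := ⟨m-1, by omega⟩
    have hm' : m' ≤ L := by omega
    have e1 : V.take (m'+1) = true :: w.take m' := by
      simp only [hVdef]
      rw [List.take_append_of_le_length (by simp; omega)]
      rfl
    have e2 : W.take (m'+1) = false :: w.take m' := by
      simp only [hWdef]
      rw [List.take_append_of_le_length (by simp; omega)]
      rfl
    rw [e1]
    simp only [hgdef]
    rw [e2]
    simp [List.count_cons]
  -- the symmetry relation
  have hS1 : ∀ m, 0 < m → m < n → g m + g (n - m) + 1 = oc := by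
    intro m hm1 hm2
    have hbW := hWb 0 (n-m) m (by omega) (by omega)
    have hbW2 := hWb (n-m) 0 m (by omega) (by omega)
    simp only [Nat.zero_add] at hbW hbW2
    rw [show n-m+m = n by omega] at hbW hbW2
    -- V windows
    have hlenV : ((V.drop 0).take m).length = ((V.drop (n-m)).take m).length := by
      simp only [List.length_take, List.length_drop, hVlen]
      omega
    have hbV := hVbal ((V.drop 0).take m) ((V.drop (n-m)).take m)
      (infix_drop_take V 0 m) (infix_drop_take V (n-m) m) hlenV
    have ec1 : ((V.drop 0).take m).count true = g m + 1 := by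
      rw [List.drop_zero]
      exact hVtake m (by omega) (by omega)
    have ec2 : ((V.drop (n-m)).take m).count true + (g (n-m) + 1) = oc := by
      have e := count_take_add V (n-m) m
      rw [show (n-m)+m = n by omega] at e
      rw [show V.take n = V from by rw [← hVlen]; exact List.take_length] at e
      rw [hVcount, hVtake (n-m) (by omega) (by omega)] at e
      omega
    rw [abs_le] at hbV
    rw [ec1] at hbV
    omega
  -- subadditivity
  have hSUB : ∀ s k, s + k ≤ n → g (s+k) ≤ g s + g k + 1 := by
    intro s k hsk
    have hb := hWb s 0 k (by omega) (by omega)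
    simp only [Nat.zero_add] at hb
    omega
  -- superadditivity
  have hSUP : ∀ a b, 1 ≤ a → 1 ≤ b → a + b ≤ n → g a + g b ≤ g (a+b) := by
    intro a b ha hb hab
    rcases Nat.lt_or_ge (a+b) n with hlt | hge
    · obtain ⟨a', rfl⟩ : ∃ a', a = a'+1 := ⟨a-1, by omega⟩
      have e1 : W.drop (a'+1) = w.drop a' ++ [true] := by
        simp only [hWdef]
        rw [List.drop_append_of_le_length (by simp; omega)]
        rfl
      have e2 : (w.drop a' ++ [true]).take b = (w.drop a').take b :=
        List.take_append_of_le_length (by simp [List.length_drop]; omega)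
      have hinf : (w.drop a').take b <:+: V := by
        have hx1 : (w.drop a').take b <:+: w := infix_drop_take w a' b
        have hx2 : w <:+: V := ⟨[true], [false], hVdef.symm⟩
        exact hx1.trans hx2
      have hlenb : ((w.drop a').take b).length = (V.take b).length := by
        simp only [List.length_take, List.length_drop, hVlen]
        omega
      have hb2 := hVbal ((w.drop a').take b) (V.take b) hinf
        ((List.take_prefix b V).isInfix) hlenb
      have ec : ((w.drop a').take b).count true + g (a'+1) = g (a'+1+b) := by
        have e := hwin (a'+1) b
        rw [e1, e2] at e
        exact e
      rw [hVtake b hb (by omega)] at hb2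
      rw [abs_le] at hb2
      omega
    · have hab' : a + b = n := by omega
      have e := hS1 a (by omega) (by omega)
      rw [show n - a = b by omega] at e
      rw [hab', hgn]
      omega
  -- cyclic window counts
  set C : ℕ → ℕ → ℕ :=
    fun s k => if s + k ≤ n then g (s+k) - g s else (g (s+k-n) + oc) - g s with hCdef
  have hc1 : ∀ s k, s < n → k ≤ n → g k ≤ C s k ∧ C s k ≤ g k + 1 := by
    intro s k hs hk
    by_cases hsk : s + k ≤ n
    · simp only [hCdef]
      rw [if_pos hsk]
      rcases Nat.eq_zero_or_pos s with rfl | hspos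
      · simp only [Nat.zero_add]
        omega
      rcases Nat.eq_zero_or_pos k with rfl | hkpos
      · simp only [Nat.add_zero]
        omega
      · have h1 := hSUP s k hspos hkpos hsk
        have h2 := hSUB s k hsk
        have h3 := hgmono s (s+k) (by omega)
        omega
    · push_neg at hsk
      simp only [hCdef]
      rw [if_neg (by omega)]
      have e1 := hS1 (n - s) (by omega) (by omega)
      rw [show n - (n - s) = s by omega] at e1
      have e2 := hSUP (n-s) (s+k-n) (by omega) (by omega) (by omega)
      rw [show (n-s) + (s+k-n) = k by omega] at e2
      have e3 := hSUB (n-s) (s+k-n) (by omega)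
      rw [show (n-s) + (s+k-n) = k by omega] at e3
      have e4 := hgle s
      omega
  set st : ℕ → ℕ := fun m => g (m+1) - g m with hstdef
  have hstepC : ∀ s k, s < n → k + 1 ≤ n → C s (k+1) = C s k + st ((s+k) % n) := by
    intro s k hs hk
    rcases Nat.lt_trichotomy (s+k) n with h1 | h1 | h1
    · have hmod : (s+k) % n = s + k := Nat.mod_eq_of_lt h1
      simp only [hCdef, hstdef, hmod]
      rw [if_pos (by omega), if_pos (by omega)]
      have m1 := hgmono s (s+k) (by omega)
      have m2 := hgmono (s+k) (s+k+1) (by omega)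
      rw [show s + (k+1) = (s+k)+1 by omega]
      omega
    · have hmod : (s+k) % n = 0 := by rw [h1, Nat.mod_self]
      simp only [hCdef, hstdef, hmod]
      rw [if_neg (by omega), if_pos (by omega)]
      rw [show s + (k+1) - n = 1 by omega, h1]
      have := hgle s
      simp only [Nat.zero_add]
      omega
    · have hmod : (s+k) % n = s + k - n := by
        rw [Nat.mod_eq_sub_mod (by omega), Nat.mod_eq_of_lt (by omega)]
      simp only [hCdef, hstdef, hmod]
      rw [if_neg (by omega), if_neg (by omega)]
      have m1 := hgmono (s+k-n) ((s+k-n)+1) (by omega)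
      have m2 := hgle s
      rw [show s + (k+1) - n = (s+k-n)+1 by omega]
      omega
  have hTEL : ∀ M, M ≤ n → (Finset.range M).sum st = g M := by
    intro M
    induction M with
    | zero => intro _; simp [hg0]
    | succ M ih =>
      intro hM
      rw [Finset.sum_range_succ, ih (by omega)]
      have := hgmono M (M+1) (by omega)
      have hstM : st M = g (M+1) - g M := rfl
      omega
  have hROT1 : ∀ (F : ℕ → ℕ),
      (Finset.range n).sum (fun s => F ((s+1) % n)) = (Finset.range n).sum (fun s => F (s % n)) := by
    intro F
    obtain ⟨N, hN⟩ : ∃ N, n = N+1 := ⟨n-1, by omega⟩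
    rw [hN, Finset.sum_range_succ, Finset.sum_range_succ' (fun s => F (s % (N+1))) N]
    simp [Nat.mod_self]
  have hROT : ∀ (F : ℕ → ℕ) k,
      (Finset.range n).sum (fun s => F ((s+k) % n)) = (Finset.range n).sum (fun s => F (s % n)) := by
    intro F k
    induction k with
    | zero => simp
    | succ k ih =>
      have hc : ∀ s, (s + (k+1)) % n = (((s+1) % n) + k) % n := by
        intro s
        rw [Nat.mod_add_mod]
        congr 1
        omega
      calc (Finset.range n).sum (fun s => F ((s+(k+1)) % n))
          = (Finset.range n).sum (fun s => F ((((s+1) % n) + k) % n)) :=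
            Finset.sum_congr rfl (fun s _ => by rw [hc s])
        _ = (Finset.range n).sum (fun s => F (((s % n) + k) % n)) :=
            hROT1 (fun x => F ((x + k) % n))
        _ = (Finset.range n).sum (fun s => F ((s + k) % n)) := by
            refine Finset.sum_congr rfl (fun s hs => ?_)
            rw [Nat.mod_add_mod]
        _ = (Finset.range n).sum (fun s => F (s % n)) := ih
  have hSUM : ∀ k, k ≤ n → (Finset.range n).sum (fun s => C s k) = k * oc := by
    intro k
    induction k with
    | zero =>
      intro _
      rw [show (0:ℕ) * oc = 0 by ring]
      refine Finset.sum_eq_zero (fun s hs => ?_)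
      have : s < n := Finset.mem_range.mp hs
      simp only [hCdef]
      rw [if_pos (by omega), Nat.add_zero]
      omega
    | succ k ih =>
      intro hk
      have e1 : (Finset.range n).sum (fun s => C s (k+1))
          = (Finset.range n).sum (fun s => C s k + st ((s+k) % n)) :=
        Finset.sum_congr rfl (fun s hs => hstepC s k (Finset.mem_range.mp hs) hk)
      rw [e1, Finset.sum_add_distrib, ih (by omega), hROT st k]
      have e2 : (Finset.range n).sum (fun s => st (s % n)) = (Finset.range n).sum st :=
        Finset.sum_congr rfl (fun s hs => by rw [Nat.mod_eq_of_lt (Finset.mem_range.mp hs)])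
      rw [e2, hTEL n (le_refl n), hgn]
      ring
  have hGK : ∀ k, k ≤ n → n * g k ≤ k * oc ∧ k * oc ≤ n * g k + n := by
    intro k hk
    have hlow : (Finset.range n).sum (fun _ => g k) ≤ (Finset.range n).sum (fun s => C s k) :=
      Finset.sum_le_sum (fun s hs => (hc1 s k (Finset.mem_range.mp hs) hk).1)
    have hhigh : (Finset.range n).sum (fun s => C s k) ≤ (Finset.range n).sum (fun _ => g k + 1) :=
      Finset.sum_le_sum (fun s hs => (hc1 s k (Finset.mem_range.mp hs) hk).2)
    rw [hSUM k hk] at hlow hhigh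
    rw [Finset.sum_const, Finset.card_range, smul_eq_mul] at hlow
    rw [Finset.sum_const, Finset.card_range, smul_eq_mul] at hhigh
    have e : n * (g k + 1) = n * g k + n := by ring
    omega
  -- coprimality of oc and n
  have hGCD : Nat.Coprime oc n := by
    by_contra hnc
    have hgpos : 0 < Nat.gcd oc n := Nat.gcd_pos_of_pos_right oc hn0
    have hd2 : 2 ≤ Nat.gcd oc n := by
      rcases Nat.lt_or_ge (Nat.gcd oc n) 2 with hlt | hge
      · exact absurd (show Nat.gcd oc n = 1 by omega) hnc
      · exact hge
    obtain ⟨oc', hoc'⟩ := Nat.gcd_dvd_left oc n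
    obtain ⟨n', hn'⟩ := Nat.gcd_dvd_right oc n
    set d := Nat.gcd oc n with hddef
    have hoc'pos : 1 ≤ oc' := by
      rcases Nat.eq_zero_or_pos oc' with rfl | hp
      · rw [Nat.mul_zero] at hoc'; omega
      · exact hp
    have hn'pos : 1 ≤ n' := by
      rcases Nat.eq_zero_or_pos n' with rfl | hp
      · rw [Nat.mul_zero] at hn'; omega
      · exact hp
    have hn'ltn : n' < n := by
      have hle : n' ≤ n := Nat.le_of_dvd hn0 (Dvd.intro_left d hn'.symm)
      rcases Nat.lt_or_ge n' n with hlt | hge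
      · exact hlt
      · exfalso
        have heq : n' = n := by omega
        rw [heq] at hn'
        have hd1 : d = 1 := Nat.eq_of_mul_eq_mul_right hn0 (by rw [one_mul]; exact hn'.symm)
        omega
    have hkey : n' * oc = n * oc' := by rw [hoc', hn']; ring
    obtain ⟨k1, k2⟩ := hGK n' (by omega)
    have hb1 : g n' ≤ oc' := by
      have e : n * g n' ≤ n * oc' := by rw [← hkey]; exact k1
      exact Nat.le_of_mul_le_mul_left e hn0
    have hb2 : oc' ≤ g n' + 1 := by
      have e : n' * oc ≤ n * (g n' + 1) := by
        have e2 : n * (g n' + 1) = n * g n' + n := by ring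
        omega
      rw [hkey] at e
      exact Nat.le_of_mul_le_mul_left e hn0
    have hIS : ∀ m, 1 ≤ m → m * n' ≤ n → m * g n' ≤ g (m * n') := by
      intro m
      induction m with
      | zero => intro h0 _; omega
      | succ m ih =>
        intro _ hmn
        rcases Nat.eq_zero_or_pos m with rfl | hm
        · simp
        · have hsm : (m+1) * n' = m * n' + n' := by rw [Nat.succ_mul]
          have hmn' : m * n' ≤ n := by omega
          have i1 := ih hm hmn'
          have i2 := hSUP (m * n') n' (Nat.mul_pos hm hn'pos) hn'pos (by omega)
          have hsg : (m+1) * g n' = m * g n' + g n' := by rw [Nat.succ_mul]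
          rw [hsm]
          omega
    have hISb : ∀ m, 1 ≤ m → m * n' ≤ n → g (m * n') ≤ m * (g n' + 1) - 1 := by
      intro m
      induction m with
      | zero => intro h0 _; omega
      | succ m ih =>
        intro _ hmn
        rcases Nat.eq_zero_or_pos m with rfl | hm
        · simp only [Nat.zero_add, one_mul]
          omega
        · have hsm : (m+1) * n' = m * n' + n' := by rw [Nat.succ_mul]
          have hmn' : m * n' ≤ n := by omega
          have i1 := ih hm hmn'
          have i2 := hSUB (m*n') n' (by omega)
          have hsg : (m+1) * (g n' + 1) = m * (g n' + 1) + (g n' + 1) := by rw [Nat.succ_mul]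
          have hpos : 1 ≤ m * (g n' + 1) := Nat.mul_pos hm (by omega)
          rw [hsm]
          omega
    rcases Nat.lt_or_ge (g n') oc' with hcase | hcase
    · -- g n' = oc' - 1
      have e := hISb d (by omega) (le_of_eq hn'.symm)
      rw [← hn', hgn] at e
      have e2 : d * (g n' + 1) = d * oc' := by
        congr 1
        omega
      rw [e2, ← hoc'] at e
      omega
    · -- g n' = oc'
      have hb3 : g n' = oc' := by omega
      have hd1n : (d-1) * n' = n - n' := by
        have e0 : ((d-1)+1) * n' = (d-1)*n' + 1*n' := Nat.add_mul _ _ _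
        rw [show (d-1)+1 = d by omega] at e0
        omega
      have e := hIS (d-1) (by omega) (by omega)
      rw [hd1n, hb3] at e
      have e1 := hS1 n' (by omega) (by omega)
      have e2 : ((d-1)+1) * oc' = (d-1)*oc' + 1*oc' := Nat.add_mul _ _ _
      rw [show (d-1)+1 = d by omega] at e2
      rw [hb3] at e1
      omega
  -- exact prefix counts
  have hGEQ : ∀ k, k ≤ n → g k = k * oc / n := by
    intro k hk
    obtain ⟨k1, k2⟩ := hGK k hk
    by_cases hdeq : k * oc = n * g k + n
    · exfalso
      have hdvd : n ∣ k * oc := ⟨g k + 1, by rw [hdeq]; ring⟩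
      have hnk : n ∣ k := Nat.Coprime.dvd_of_dvd_mul_right hGCD.symm hdvd
      have hk0n : k = 0 ∨ k = n := by
        rcases Nat.eq_zero_or_pos k with rfl | hkpos
        · left; rfl
        · right
          have := Nat.le_of_dvd hkpos hnk
          omega
      rcases hk0n with rfl | rfl
      · rw [Nat.zero_mul, hg0, Nat.mul_zero] at hdeq
        omega
      · rw [hgn] at hdeq
        omega
    · have hlt : k * oc < n * g k + n := by omega
      have hge : g k ≤ k * oc / n := (Nat.le_div_iff_mul_le hn0).mpr (by rw [Nat.mul_comm]; exact k1)
      have hlt2 : k * oc / n < g k + 1 := by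
        rw [Nat.div_lt_iff_lt_mul hn0]
        calc k * oc < n * g k + n := hlt
        _ = (g k + 1) * n := by ring
      omega
  -- letters of w
  have hWget : ∀ i (hi : i < L), W[i+1]'(by rw [hWlen]; omega) = w[i] := by
    intro i hi
    simp only [hWdef]
    rw [List.getElem_append_left (by simp; omega)]
    simp
  have hgsucc : ∀ m (hm : m < n), g (m+1) = g m + (if W[m]'(by rw [hWlen]; omega) = true then 1 else 0) := by
    intro m hm
    have hms : m < W.length := by rw [hWlen]; omega
    simp only [hgdef]
    rw [List.take_succ, List.count_append, List.getElem?_eq_getElem hms]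
    have hcount : ((some (W[m]'hms)).toList.count true) = (if W[m]'hms = true then 1 else 0) := by
      cases hxx : W[m]'hms <;> simp
    rw [hcount]
  have hLET : ∀ i (hi : i < L), w[i] = decide ((((i+2)*oc) % n) < oc) := by
    intro i hi
    have e1 := hgsucc (i+1) (by omega)
    rw [hWget i hi] at e1
    rw [hGEQ (i+2) (by omega), hGEQ (i+1) (by omega)] at e1
    have e2 := div_add_step ((i+1)*oc) oc n hn0 (by omega)
    rw [show (i+1)*oc + oc = (i+2)*oc by ring] at e2
    by_cases hc : ((i+2)*oc) % n < oc
    · rw [if_pos hc] at e2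
      cases hw2 : w[i]'hi
      · exfalso
        rw [hw2] at e1
        simp at e1
        omega
      · simp [hc]
    · rw [if_neg hc] at e2
      cases hw2 : w[i]'hi
      · simp [hc]
      · exfalso
        rw [hw2] at e1
        simp at e1
        omega
  -- construct p := oc⁻¹ mod n
  haveI : NeZero n := ⟨by omega⟩
  set U : ZMod n := (((ZMod.unitOfCoprime oc hGCD)⁻¹ : (ZMod n)ˣ) : ZMod n) with hUdef
  set p := U.val with hpdef
  have hhp : oc * p ≡ 1 [MOD n] := by
    have h1 : ((oc : ZMod n)) * U = 1 := by
      rw [hUdef, ← ZMod.coe_unitOfCoprime oc hGCD, ← Units.val_mul]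
      simp
    have h2 : ((oc * p : ℕ) : ZMod n) = ((1:ℕ) : ZMod n) := by
      rw [Nat.cast_mul, Nat.cast_one, hpdef, ZMod.natCast_rightInverse U]
      exact h1
    exact (ZMod.natCast_eq_natCast_iff _ _ _).mp h2
  have h1n : (1:ℕ) % n = 1 := Nat.mod_eq_of_lt (by omega)
  have hhpmod : (oc * p) % n = 1 := by
    have hx := hhp
    rwa [Nat.ModEq, h1n] at hx
  have hp1 : 1 ≤ p := by
    rcases Nat.eq_zero_or_pos p with h0 | hx
    · rw [h0, Nat.mul_zero] at hhpmod; simp at hhpmod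
    · exact hx
  have hpn : p < n := ZMod.val_lt U
  have hcopn : Nat.Coprime p n := by
    have hd : Nat.gcd p n ∣ 1 := by
      have h₁ : Nat.gcd p n ∣ oc * p := Dvd.dvd.mul_left (Nat.gcd_dvd_left p n) oc
      have h₂ : Nat.gcd p n ∣ n * ((oc*p)/n) := Dvd.dvd.mul_right (Nat.gcd_dvd_right p n) _
      have h₃ := Nat.div_add_mod (oc*p) n
      rw [hhpmod] at h₃
      have h₄ : oc * p - n * ((oc*p)/n) = 1 := by omega
      rw [← h₄]; exact Nat.dvd_sub h₁ h₂
    exact Nat.dvd_one.mp hd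
  set q := n - p with hqdef
  have hq1 : 1 ≤ q := by omega
  have hphmod : (p * oc) % n = 1 := by rwa [Nat.mul_comm] at hhpmod
  have hqhmod : (q * oc) % n = n - 1 := by
    have hle1 : 1 * oc ≤ n * oc := Nat.mul_le_mul_right oc (by omega)
    have hlep : p * oc ≤ n * oc := Nat.mul_le_mul_right oc (by omega)
    have hsub : q * oc = n * oc - p * oc := by
      rw [hqdef, Nat.sub_mul]
    have hz : (q*oc + p*oc) % n = 0 := by
      rw [show q*oc + p*oc = n*oc by omega]
      exact Nat.mul_mod_right n oc
    have hrnz : (p*oc) % n ≠ 0 := by rw [hphmod]; omega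
    have hcc := mod_compl hn0 hz hrnz
    rw [hphmod] at hcc
    have hlt : (q*oc) % n < n := Nat.mod_lt _ (by omega)
    omega
  -- modular helper
  have hMUL : ∀ x, x * oc * p ≡ x [MOD n] := by
    intro x
    rw [show x*oc*p = x*(oc*p) by ring]
    calc x*(oc*p) ≡ x*1 [MOD n] := Nat.ModEq.mul_left x hhp
    _ = x := by ring
  -- step lemmas
  have hPSTEP : ∀ i, i + p + 2 ≤ n - 1 →
      ((((i+2)*oc) % n < oc) ↔ ((((i+p+2)*oc) % n) < oc)) := by
    intro i hip
    have hz' : ((i+p+2)*oc) % n = (((i+2)*oc) % n + 1) % n := by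
      rw [show (i+p+2)*oc = (i+2)*oc + p*oc by ring]
      rw [Nat.add_mod, hphmod]
    have hzn : ((i+2)*oc) % n < n := Nat.mod_lt _ (by omega)
    have hz1 : ((i+2)*oc) % n ≠ oc - 1 := by
      intro hcon
      have c1 : (i+2)*oc ≡ oc-1 [MOD n] := by
        rw [Nat.ModEq, hcon, Nat.mod_eq_of_lt (by omega)]
      have c4 : i+2 ≡ (oc-1)*p [MOD n] := (hMUL (i+2)).symm.trans (c1.mul_right p)
      have c5 : (i+2) + p ≡ (oc-1)*p + p [MOD n] := c4.add_right p
      have c6 : (oc-1)*p + p = oc * p := by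
        have e0 : ((oc-1)+1)*p = (oc-1)*p + 1*p := Nat.add_mul _ _ _
        rw [show (oc-1)+1 = oc by omega] at e0
        omega
      rw [c6] at c5
      have c7 : (i+2+p) % n = 1 := by
        have cc := c5
        rw [Nat.ModEq] at cc
        rw [hhpmod] at cc
        exact cc
      rw [Nat.mod_eq_of_lt (by omega)] at c7
      omega
    have hz2 : ((i+2)*oc) % n ≠ n - 1 := by
      intro hcon
      have c1 : (i+2)*oc ≡ n-1 [MOD n] := by
        rw [Nat.ModEq, hcon, Nat.mod_eq_of_lt (by omega)]
      have c4 : i+2 ≡ (n-1)*p [MOD n] := (hMUL (i+2)).symm.trans (c1.mul_right p)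
      have c5 : (i+2) + p ≡ (n-1)*p + p [MOD n] := c4.add_right p
      have c6 : (n-1)*p + p = n * p := by
        have e0 : ((n-1)+1)*p = (n-1)*p + 1*p := Nat.add_mul _ _ _
        rw [show (n-1)+1 = n by omega] at e0
        omega
      rw [c6] at c5
      have c7 : (i+2+p) % n = 0 := by
        have cc := c5
        rw [Nat.ModEq, Nat.mul_mod_right] at cc
        exact cc
      rw [Nat.mod_eq_of_lt (by omega)] at c7
      omega
    have hfin : (((i+2)*oc % n) + 1) % n = ((i+2)*oc % n) + 1 := Nat.mod_eq_of_lt (by omega)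
    rw [hz', hfin]
    omega
  have hQSTEP : ∀ i, i + q + 2 ≤ n - 1 →
      ((((i+2)*oc) % n < oc) ↔ ((((i+q+2)*oc) % n) < oc)) := by
    intro i hiq
    have hz' : ((i+q+2)*oc) % n = (((i+2)*oc) % n + (n-1)) % n := by
      rw [show (i+q+2)*oc = (i+2)*oc + q*oc by ring]
      rw [Nat.add_mod, hqhmod]
    have hzn : ((i+2)*oc) % n < n := Nat.mod_lt _ (by omega)
    have hz0 : ((i+2)*oc) % n ≠ 0 := by
      intro hcon
      have hdvd : n ∣ (i+2)*oc := Nat.dvd_of_mod_eq_zero hcon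
      have hni : n ∣ (i+2) := Nat.Coprime.dvd_of_dvd_mul_right hGCD.symm hdvd
      have := Nat.le_of_dvd (by omega) hni
      omega
    have hzh : ((i+2)*oc) % n ≠ oc := by
      intro hcon
      have c1 : (i+2)*oc ≡ oc [MOD n] := by
        rw [Nat.ModEq, hcon, Nat.mod_eq_of_lt (by omega)]
      have c4 : i+2 ≡ oc*p [MOD n] := (hMUL (i+2)).symm.trans (c1.mul_right p)
      have c7 : (i+2) % n = 1 := by
        have cc := c4
        rw [Nat.ModEq] at cc
        rw [hhpmod] at cc
        exact cc
      rw [Nat.mod_eq_of_lt (by omega)] at c7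
      omega
    have hfin : (((i+2)*oc % n) + (n-1)) % n = ((i+2)*oc % n) - 1 := by
      rw [Nat.mod_eq_sub_mod (by omega), Nat.mod_eq_of_lt (by omega)]
      omega
    rw [hz', hfin]
    omega
  -- chains
  have hPCH : ∀ t i, i + p * t + 2 ≤ n - 1 →
      ((((i+2)*oc) % n < oc) ↔ ((((i+p*t+2)*oc) % n) < oc)) := by
    intro t
    induction t with
    | zero => intro i _; rw [Nat.mul_zero]
    | succ t ih =>
      intro i hit
      have e : p * (t+1) = p * t + p := by ring
      have h1 := ih i (by omega)
      have h2 := hPSTEP (i + p*t) (by omega)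
      rw [show i + p*t + p + 2 = i + p*(t+1) + 2 by omega] at h2
      exact h1.trans h2
  have hQCH : ∀ t i, i + q * t + 2 ≤ n - 1 →
      ((((i+2)*oc) % n < oc) ↔ ((((i+q*t+2)*oc) % n) < oc)) := by
    intro t
    induction t with
    | zero => intro i _; rw [Nat.mul_zero]
    | succ t ih =>
      intro i hit
      have e : q * (t+1) = q * t + q := by ring
      have h1 := ih i (by omega)
      have h2 := hQSTEP (i + q*t) (by omega)
      rw [show i + q*t + q + 2 = i + q*(t+1) + 2 by omega] at h2
      exact h1.trans h2
  -- periods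
  have hpp : HasPeriod w p := by
    refine ⟨by omega, ?_⟩
    have haux : ∀ i j, i ≤ j → j < w.length → i % p = j % p → w[i]? = w[j]? := by
      intro i j hij hj hm
      have hi : i < w.length := by omega
      have hd : p ∣ (j - i) := (Nat.modEq_iff_dvd' hij).mp hm
      obtain ⟨t, ht⟩ := hd
      have hiff := hPCH t i (by omega)
      rw [show i + p*t = j by omega] at hiff
      have hl : w[i]'hi = w[j]'hj := by
        rw [hLET i hi, hLET j hj]
        exact decide_eq_decide.mpr hiff
      rw [List.getElem?_eq_getElem hi, List.getElem?_eq_getElem hj]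
      rw [hl]
    intro i j hi hj hm
    rcases Nat.le_total i j with hij | hij
    · exact haux i j hij hj hm
    · exact (haux j i hij hi hm.symm).symm
  have hqq : HasPeriod w q := by
    refine ⟨by omega, ?_⟩
    have haux : ∀ i j, i ≤ j → j < w.length → i % q = j % q → w[i]? = w[j]? := by
      intro i j hij hj hm
      have hi : i < w.length := by omega
      have hd : q ∣ (j - i) := (Nat.modEq_iff_dvd' hij).mp hm
      obtain ⟨t, ht⟩ := hd
      have hiff := hQCH t i (by omega)
      rw [show i + q*t = j by omega] at hiff
      have hl : w[i]'hi = w[j]'hj := by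
        rw [hLET i hi, hLET j hj]
        exact decide_eq_decide.mpr hiff
      rw [List.getElem?_eq_getElem hi, List.getElem?_eq_getElem hj]
      rw [hl]
    intro i j hi hj hm
    rcases Nat.le_total i j with hij | hij
    · exact haux i j hij hj hm
    · exact (haux j i hij hi hm.symm).symm
  have hcopq : Nat.Coprime p q := by
    have hd : Nat.gcd p q ∣ 1 := by
      have d1 : Nat.gcd p q ∣ p := Nat.gcd_dvd_left _ _
      have d2 : Nat.gcd p q ∣ q := Nat.gcd_dvd_right _ _
      have d3 : Nat.gcd p q ∣ n := by
        rw [show n = p + q by omega]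
        exact Nat.dvd_add d1 d2
      have d4 : Nat.gcd p q ∣ Nat.gcd p n := Nat.dvd_gcd d1 d3
      rwa [hcopn] at d4
    exact Nat.dvd_one.mp hd
  exact ⟨p, q, hcopq, hpp, hqq, by omega⟩
/-- A binary word is strictly bispecial (all of `0w0`, `0w1`, `1w0`, `1w1` balanced)
iff it is a central word. -/
theorem strictly_bispecial_iff_central (w : List Bool) :
    (IsBalanced ([false] ++ w ++ [false]) ∧ IsBalanced ([false] ++ w ++ [true]) ∧
      IsBalanced ([true] ++ w ++ [false]) ∧ IsBalanced ([true] ++ w ++ [true])) ↔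
      (∃ p q : ℕ, Nat.Coprime p q ∧ HasPeriod w p ∧ HasPeriod w q ∧
        w.length = p + q - 2) := by
  constructor
  · rintro ⟨hFF, hFT, hTF, hTT⟩
    exact hard w hFT hTF
  · rintro ⟨p, q, hco, hp, hq, hlen⟩
    have hb := easy w p q hco hp hq hlen
    exact ⟨hb false false, hb false true, hb true false, hb true true⟩
end

section
/- If L is a factorial language over alphabet Σ containing all single letters, then for any word w the greedy factorization of w into words of L (taking at each step the longest prefix belonging to L) has minimal length among all factorizations of w into words of L. -/
set_option linter.deprecated false

/-- If `L` is a factorial language containing all single letters, then any greedy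
factorization of `w` into words of `L` (each term is a longest prefix in `L` of the
remaining suffix) is of minimal length among all factorizations of `w` into words of `L`. -/
theorem greedy_factorization_minimal {α : Type*} (L : Set (List α))
    (hfac : ∀ u v : List α, u ∈ L → v <:+: u → v ∈ L)
    (hlet : ∀ a : α, [a] ∈ L)
    (w : List α) (xs : List (List α))
    (hjoin : xs.flatten = w)
    (hne : ∀ x ∈ xs, x ≠ ([] : List α))
    (hmem : ∀ x ∈ xs, x ∈ L)
    (hgreedy : ∀ i < xs.length, ∀ y : List α,
      y <+: (xs.drop i).flatten → y ∈ L → y.length ≤ (xs.getD i []).length) :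
    ∀ ys : List (List α), ys.flatten = w → (∀ y ∈ ys, y ≠ ([] : List α)) →
      (∀ y ∈ ys, y ∈ L) → xs.length ≤ ys.length := by
  intro ys hjoin' hne' hmem'
  -- key invariant: first k greedy blocks cover at least as much as first k blocks of ys
  have key : ∀ k : ℕ, ((ys.take k).flatten).length ≤ ((xs.take k).flatten).length := by
    intro k
    induction k with
    | zero => simp
    | succ k ih =>
      -- lengths of take-flattens are monotone in k, and bounded by |w|
      have gmono : ((xs.take k).flatten).length ≤ ((xs.take (k + 1)).flatten).length := by
        rw [List.take_succ, List.flatten_append]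
        simp
      by_cases hk2 : k < ys.length
      · by_cases hk1 : k < xs.length
        · -- main case
          have hgsucc : ((xs.take (k + 1)).flatten).length
              = ((xs.take k).flatten).length + xs[k].length := by
            rw [List.take_succ, List.flatten_append, List.getElem?_eq_getElem hk1]
            simp
          have htsucc : ((ys.take (k + 1)).flatten).length
              = ((ys.take k).flatten).length + ys[k].length := by
            rw [List.take_succ, List.flatten_append, List.getElem?_eq_getElem hk2]
            simp
          rw [hgsucc, htsucc]
          set A : ℕ := ((xs.take k).flatten).length with hA
          set B : ℕ := ((ys.take k).flatten).length with hB
          by_cases hcase : B + ys[k].length ≤ A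
          · omega
          · push_neg at hcase
            have hdle : A - B < ys[k].length := by omega
            -- s : the part of ys[k] not yet covered by the first k greedy blocks
            have hsL : ys[k].drop (A - B) ∈ L := by
              refine hfac ys[k] _ (hmem' ys[k] (List.getElem_mem hk2)) ?_
              exact (List.drop_suffix (A - B) ys[k]).isInfix
            -- w decompositions
            have hw1 : w = (xs.take k).flatten ++ (xs.drop k).flatten := by
              conv_lhs => rw [← hjoin, ← List.take_append_drop k xs]
              rw [List.flatten_append]
            have hw2 : w = (ys.take k).flatten ++ (ys[k] ++ (ys.drop (k + 1)).flatten) := by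
              conv_lhs => rw [← hjoin', ← List.take_append_drop k ys]
              rw [List.flatten_append, List.drop_eq_getElem_cons hk2, List.flatten_cons]
            -- (xs.drop k).flatten = s ++ rest
            have hdropA : (xs.drop k).flatten
                = ys[k].drop (A - B) ++ (ys.drop (k + 1)).flatten := by
              have h1 : (xs.drop k).flatten = w.drop A := by
                rw [hw1, hA, List.drop_left]
              rw [h1, hw2, List.drop_append]
              have hBnil : ((ys.take k).flatten).drop A = [] := by
                apply List.drop_eq_nil_of_le; omega
              rw [hBnil, List.nil_append, List.drop_append]
              have h2 : A - B - ys[k].length = 0 := by omega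
              rw [← hB, h2, List.drop_zero]
            -- greedy bound
            have hpre : ys[k].drop (A - B) <+: (xs.drop k).flatten := by
              rw [hdropA]; exact List.prefix_append _ _
            have hlen := hgreedy k hk1 _ hpre hsL
            rw [List.getD_eq_getElem xs [] hk1] at hlen
            have hslen : (ys[k].drop (A - B)).length = ys[k].length - (A - B) := by
              simp
            omega
        · -- xs exhausted: greedy already covers all of w
          push_neg at hk1
          have hall : xs.take k = xs := List.take_of_length_le hk1
          have hle : ((ys.take (k + 1)).flatten).length ≤ w.length := by
            have h1 : w = (ys.take (k + 1)).flatten ++ (ys.drop (k + 1)).flatten := by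
              conv_lhs => rw [← hjoin', ← List.take_append_drop (k + 1) ys]
              rw [List.flatten_append]
            rw [h1, List.length_append]
            omega
          have h2 : ((xs.take k).flatten).length = w.length := by rw [hall, hjoin]
          omega
      · -- ys exhausted
        push_neg at hk2
        have h3 : ys.take (k + 1) = ys.take k := by
          rw [List.take_of_length_le hk2, List.take_of_length_le (by omega)]
        rw [h3]
        omega
  -- conclude
  by_contra h
  push_neg at h
  have hkey := key ys.length
  have hw' : (ys.take ys.length).flatten = w := by rw [List.take_length, hjoin']
  rw [hw'] at hkey
  have hw : w = (xs.take ys.length).flatten ++ (xs.drop ys.length).flatten := by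
    conv_lhs => rw [← hjoin, ← List.take_append_drop ys.length xs]
    rw [List.flatten_append]
  have hdropnil : (xs.drop ys.length).flatten = [] := by
    have h4 := congrArg List.length hw
    rw [List.length_append] at h4
    have h5 : (xs.drop ys.length).flatten.length = 0 := by omega
    exact List.eq_nil_of_length_eq_zero h5
  have hcons : xs.drop ys.length = xs[ys.length] :: xs.drop (ys.length + 1) :=
    List.drop_eq_getElem_cons h
  have hxne : xs[ys.length] ≠ [] := hne _ (List.getElem_mem h)
  rw [hcons] at hdropnil
  simp only [List.flatten_cons, List.append_eq_nil_iff] at hdropnil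
  exact hxne hdropnil.1
end

section
/- Every Fibonacci word f_n is balanced, where f_1 = 1, f_2 = 0, and f_n = f_{n-1} f_{n-2} for n > 2. -/
/-- The Fibonacci words: `f₁ = 1`, `f₂ = 0`, `fₙ = fₙ₋₁fₙ₋₂`. -/
def fibWord : ℕ → List Bool
  | 0 => [true]
  | 1 => [true]
  | 2 => [false]
  | (n + 3) => fibWord (n + 2) ++ fibWord (n + 1)

namespace FibAux

noncomputable def bb : ℝ := (Real.sqrt 5 - 1) / 2

noncomputable def al : ℝ := (3 - Real.sqrt 5) / 2

lemma sq5_sq : Real.sqrt 5 ^ 2 = 5 := Real.sq_sqrt (by norm_num)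

lemma sq5_lb : 2 < Real.sqrt 5 := by
  nlinarith [sq5_sq, Real.sqrt_nonneg 5]

lemma sq5_ub : Real.sqrt 5 < 3 := by
  nlinarith [sq5_sq, Real.sqrt_nonneg 5]

lemma bb_pos : 0 < bb := by unfold bb; linarith [sq5_lb]

lemma bb_lt_one : bb < 1 := by unfold bb; linarith [sq5_ub]

lemma bb_sq : bb ^ 2 = 1 - bb := by
  unfold bb; nlinarith [sq5_sq]

lemma al_eq : al = bb ^ 2 := by unfold al; rw [bb_sq]; unfold bb; ring

lemma al_pos : 0 < al := by rw [al_eq]; have := bb_pos; positivity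

lemma al_lt_one : al < 1 := by unfold al; linarith [sq5_lb]

lemma bb_pow_step (n : ℕ) : bb ^ (n + 2) = bb ^ n - bb ^ (n + 1) := by
  have : bb ^ (n + 2) = bb ^ n * bb ^ 2 := by ring
  rw [this, bb_sq]; ring

noncomputable def S (k : ℕ) : ℤ := ⌊(k : ℝ) * al⌋

noncomputable def sw (i : ℕ) : Bool := decide (S (i + 2) - S (i + 1) = 1)

lemma S_step (k : ℕ) : S k ≤ S (k + 1) ∧ S (k + 1) ≤ S k + 1 := by
  unfold S
  constructor
  · apply Int.floor_le_floor
    push_cast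
    nlinarith [al_pos]
  · have h1 : ((k : ℝ) + 1) * al ≤ (k : ℝ) * al + 1 := by nlinarith [al_lt_one, al_pos]
    calc ⌊((k : ℕ) + 1 : ℕ) * (al : ℝ)⌋ ≤ ⌊(k : ℝ) * al + 1⌋ := by
          apply Int.floor_le_floor; push_cast; linarith
      _ = ⌊(k : ℝ) * al⌋ + 1 := by
          rw [show ((k : ℝ) * al + 1) = (k : ℝ) * al + (1 : ℤ) by push_cast; ring,
            Int.floor_add_intCast]

lemma count_window (a l : ℕ) :
    (((List.range' a l).map sw).count true : ℤ) = S (a + l + 1) - S (a + 1) := by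
  induction l with
  | zero => simp
  | succ l ih =>
    rw [List.range'_concat, List.map_append, List.count_append]
    have h := S_step (a + l + 1)
    rw [show a + l + 1 + 1 = a + l + 2 from rfl] at h
    by_cases h1 : S (a + l + 2) - S (a + l + 1) = 1
    · have : sw (a + 1 * l) = true := by
        simp only [one_mul]
        unfold sw
        simp only [decide_eq_true_eq]
        convert h1 using 3 <;> omega
      simp only [List.map_cons, List.map_nil, this]
      push_cast
      rw [ih]
      have e1 : a + (l + 1) + 1 = a + l + 2 := by omega
      rw [e1]
      simp
      omega
    · have : sw (a + 1 * l) = false := by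
        simp only [one_mul]
        unfold sw
        simp only [decide_eq_false_iff_not]
        intro hc
        apply h1
        convert hc using 3 <;> omega
      simp only [List.map_cons, List.map_nil, this]
      push_cast
      rw [ih]
      have e1 : a + (l + 1) + 1 = a + l + 2 := by omega
      rw [e1]
      simp
      omega

lemma window_bounds (t l : ℕ) :
    ⌊(l : ℝ) * al⌋ ≤ S (t + l) - S t ∧ S (t + l) - S t ≤ ⌊(l : ℝ) * al⌋ + 1 := by
  unfold S
  have key : ((t + l : ℕ) : ℝ) * al = (t : ℝ) * al + (l : ℝ) * al := by push_cast; ring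
  constructor
  · have h1 : (↑⌊(t : ℝ) * al⌋ + ↑⌊(l : ℝ) * al⌋ : ℝ) ≤ ((t + l : ℕ) : ℝ) * al := by
      rw [key]
      have := Int.floor_le ((t : ℝ) * al)
      have := Int.floor_le ((l : ℝ) * al)
      linarith
    have := Int.le_floor.2 (by push_cast at h1 ⊢; linarith : ((⌊(t : ℝ) * al⌋ + ⌊(l : ℝ) * al⌋ : ℤ) : ℝ) ≤ ((t + l : ℕ) : ℝ) * al)
    omega
  · have h1 : ((t + l : ℕ) : ℝ) * al < (↑(⌊(t : ℝ) * al⌋ + ⌊(l : ℝ) * al⌋ + 2) : ℝ) := by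
      rw [key]
      have := Int.lt_floor_add_one ((t : ℝ) * al)
      have := Int.lt_floor_add_one ((l : ℝ) * al)
      push_cast
      linarith
    have := Int.floor_lt.2 h1
    omega

lemma fib_mul_al (m : ℕ) :
    (Nat.fib m : ℝ) * al = 2 * (Nat.fib m : ℝ) - (Nat.fib (m + 1) : ℝ) + (-1) ^ m * bb ^ m := by
  induction m using Nat.twoStepInduction with
  | zero => norm_num
  | one =>
    simp only [Nat.fib_one, Nat.fib_two]
    rw [al_eq, bb_sq]
    push_cast
    ring
  | more n ih1 ih2 =>
    have hf : (Nat.fib (n + 2) : ℝ) = Nat.fib n + Nat.fib (n + 1) := by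
      rw [Nat.fib_add_two]; push_cast; ring
    have hf2 : (Nat.fib (n + 3) : ℝ) = Nat.fib (n + 1) + Nat.fib (n + 2) := by
      rw [show n + 3 = (n + 1) + 2 by ring, Nat.fib_add_two]; push_cast; ring
    have hb : (-1 : ℝ) ^ (n + 2) * bb ^ (n + 2) =
        (-1) ^ n * bb ^ n + (-1) ^ (n + 1) * bb ^ (n + 1) := by
      rw [bb_pow_step]
      ring
    have key : (Nat.fib (n + 2) : ℝ) * al = (Nat.fib n : ℝ) * al + (Nat.fib (n + 1) : ℝ) * al := by
      rw [hf]; ring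
    rw [key, ih1, ih2, show n + 2 + 1 = n + 3 from rfl, hf2, hf,
      show n + 1 + 1 = n + 2 from rfl, hb]
    ring

/-- largest even number `≤ m` -/
def ee (m : ℕ) : ℕ := 2 * (m / 2)

/-- largest odd number `≤ m` (for `m ≥ 1`) -/
def oo (m : ℕ) : ℕ := 2 * ((m + 1) / 2) - 1

lemma fract_al : Int.fract al = al := Int.fract_eq_self.2 ⟨le_of_lt al_pos, al_lt_one⟩

lemma bb_nonneg : (0:ℝ) ≤ bb := le_of_lt bb_pos

lemma bb_le_one : bb ≤ 1 := le_of_lt bb_lt_one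

lemma bb_pow_pos (n : ℕ) : 0 < bb ^ n := pow_pos bb_pos n

lemma bb_pow_mono {a c : ℕ} (h : a ≤ c) : bb ^ c ≤ bb ^ a :=
  pow_le_pow_of_le_one bb_nonneg bb_le_one h

lemma fract_bounds : ∀ m k : ℕ, 2 ≤ m → 1 ≤ k → k ≤ Nat.fib m →
    bb ^ ee m ≤ Int.fract ((k : ℝ) * al) ∧ Int.fract ((k : ℝ) * al) ≤ 1 - bb ^ oo m := by
  intro m
  induction m using Nat.strong_induction_on with
  | _ m ih =>
  intro k hm h1 h2
  rcases Nat.lt_or_ge m 4 with hm4 | hm4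
  · have hc : m = 2 ∨ m = 3 := by omega
    rcases hc with rfl | rfl
    · -- m = 2, fib 2 = 1, k = 1
      have hfib : Nat.fib 2 = 1 := by decide
      have hk : k = 1 := by omega
      subst hk
      rw [show ((1:ℕ):ℝ) * al = al by push_cast; ring, fract_al]
      have h2' : al = bb ^ 2 := al_eq
      have h3 : bb ^ 2 = 1 - bb := bb_sq
      have hee : ee 2 = 2 := by decide
      have hoo : oo 2 = 1 := by decide
      rw [hee, hoo]
      constructor
      · nlinarith
      · nlinarith
    · -- m = 3, fib 3 = 2, k ∈ {1, 2}
      have hfib : Nat.fib 3 = 2 := by decide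
      rw [hfib] at h2
      have h3 : bb ^ 2 = 1 - bb := bb_sq
      have h4 : bb ^ 3 = bb ^ 1 - bb ^ 2 := bb_pow_step 1
      have h2' : al = bb ^ 2 := al_eq
      have hee : ee 3 = 2 := by decide
      have hoo : oo 3 = 3 := by decide
      rw [hee, hoo]
      interval_cases k
      · rw [show ((1:ℕ):ℝ) * al = al by push_cast; ring, fract_al]
        constructor
        · nlinarith
        · nlinarith [bb_pow_pos 2]
      · have h2al : Int.fract (((2:ℕ) : ℝ) * al) = 2 * al := by
          apply Int.fract_eq_self.2
          constructor
          · push_cast; nlinarith [al_pos]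
          · push_cast
            unfold al
            nlinarith [sq5_lb]
        rw [h2al]
        constructor
        · nlinarith [al_pos]
        · nlinarith
  · -- m = n + 4
    obtain ⟨n, rfl⟩ : ∃ n, m = n + 4 := ⟨m - 4, by omega⟩
    have ihA := ih (n + 3) (by omega)
    have ihB := ih (n + 2) (by omega)
    by_cases hk : k ≤ Nat.fib (n + 3)
    · obtain ⟨hl, hu⟩ := ihA k (by omega) h1 hk
      constructor
      · exact le_trans (bb_pow_mono (by unfold ee; omega)) hl
      · exact le_trans hu (by have := bb_pow_mono (a := oo (n+3)) (c := oo (n+4)) (by unfold oo; omega); linarith)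
    · -- k = fib (n+3) + j with 1 ≤ j ≤ fib (n+2)
      push_neg at hk
      have hj2' : Nat.fib (n + 4) = Nat.fib (n + 2) + Nat.fib (n + 3) := Nat.fib_add_two
      set j := k - Nat.fib (n + 3) with hj
      have hj1 : 1 ≤ j := by omega
      have hj2 : j ≤ Nat.fib (n + 2) := by omega
      obtain ⟨hl, hu⟩ := ihB j (by omega) hj1 hj2
      have hksplit : (k : ℝ) = (Nat.fib (n + 3) : ℝ) + (j : ℝ) := by
        have hkj : k = Nat.fib (n + 3) + j := by omega
        rw [hkj]
        push_cast
        ring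
      set ε : ℝ := (-1) ^ (n + 3) * bb ^ (n + 3) with hε
      have hc : ∃ c : ℤ, (Nat.fib (n + 3) : ℝ) * al = (c : ℝ) + ε := by
        refine ⟨2 * Nat.fib (n + 3) - Nat.fib (n + 4), ?_⟩
        rw [fib_mul_al]
        push_cast
        ring
      obtain ⟨c, hcval⟩ := hc
      have hkal : (k : ℝ) * al = (c : ℝ) + ((j : ℝ) * al + ε) := by
        rw [hksplit, add_mul, hcval]; ring
      have hfr1 : Int.fract ((k : ℝ) * al) = Int.fract ((j : ℝ) * al + ε) := by
        rw [hkal, Int.fract_intCast_add]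
      have hfloor : (j : ℝ) * al + ε = (⌊(j : ℝ) * al⌋ : ℝ) + (Int.fract ((j : ℝ) * al) + ε) := by
        rw [← add_assoc, Int.floor_add_fract]
      set y : ℝ := Int.fract ((j : ℝ) * al) + ε with hy
      have hfr2 : Int.fract ((k : ℝ) * al) = Int.fract y := by
        rw [hfr1, hfloor, Int.fract_intCast_add]
      -- now prove bounds on y depending on parity of n
      have key : bb ^ ee (n + 4) ≤ y ∧ y ≤ 1 - bb ^ oo (n + 4) := by
        rcases Nat.even_or_odd n with hn | hn
        · -- n even: n+3 odd, ε = -bb^(n+3)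
          have hodd : Odd (n + 3) := by
            rcases hn with ⟨t, ht⟩; exact ⟨t + 1, by omega⟩
          have hεeq : ε = -bb ^ (n + 3) := by
            rw [hε, hodd.neg_one_pow]; ring
          rw [Nat.even_iff] at hn
          have heA : ee (n + 2) = n + 2 := by unfold ee; omega
          have hoA : oo (n + 2) = n + 1 := by unfold oo; omega
          have heG : ee (n + 4) = n + 4 := by unfold ee; omega
          have hoG : oo (n + 4) = n + 3 := by unfold oo; omega
          rw [heA] at hl; rw [hoA] at hu; rw [heG, hoG, hy, hεeq]
          have hstep : bb ^ (n + 4) = bb ^ (n + 2) - bb ^ (n + 3) := bb_pow_step (n + 2)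
          constructor
          · linarith
          · nlinarith [bb_pow_pos (n + 1), bb_pow_pos (n + 3)]
        · -- n odd: n+3 even, ε = bb^(n+3)
          have heven : Even (n + 3) := by
            rcases hn with ⟨t, ht⟩; exact ⟨t + 2, by omega⟩
          have hεeq : ε = bb ^ (n + 3) := by
            rw [hε, heven.neg_one_pow]; ring
          rw [Nat.odd_iff] at hn
          have heA : ee (n + 2) = n + 1 := by unfold ee; omega
          have hoA : oo (n + 2) = n + 2 := by unfold oo; omega
          have heG : ee (n + 4) = n + 3 := by unfold ee; omega
          have hoG : oo (n + 4) = n + 4 := by unfold oo; omega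
          rw [heA] at hl; rw [hoA] at hu; rw [heG, hoG, hy, hεeq]
          have hstep : bb ^ (n + 4) = bb ^ (n + 2) - bb ^ (n + 3) := bb_pow_step (n + 2)
          constructor
          · nlinarith [bb_pow_pos (n + 1), bb_pow_pos (n + 3)]
          · linarith
      have hy01 : 0 ≤ y ∧ y < 1 := by
        constructor
        · exact le_trans (le_of_lt (bb_pow_pos _)) key.1
        · have := key.2
          nlinarith [bb_pow_pos (oo (n + 4))]
      rw [hfr2, Int.fract_eq_self.2 hy01]
      exact key

lemma S_shift (m : ℕ) (hm : 2 ≤ m) (k : ℕ) (h1 : 1 ≤ k) (h2 : k ≤ Nat.fib (m + 1)) :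
    S (Nat.fib (m + 1) + k) = (2 * (Nat.fib (m + 1) : ℤ) - (Nat.fib (m + 2) : ℤ)) + S k := by
  unfold S
  set ε : ℝ := (-1) ^ (m + 1) * bb ^ (m + 1) with hε
  set c : ℤ := 2 * (Nat.fib (m + 1) : ℤ) - (Nat.fib (m + 2) : ℤ) with hc
  have hcval : (Nat.fib (m + 1) : ℝ) * al = (c : ℝ) + ε := by
    rw [fib_mul_al, hc]
    push_cast
    ring
  have hsplit : ((Nat.fib (m + 1) + k : ℕ) : ℝ) * al = (c : ℝ) + ((k : ℝ) * al + ε) := by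
    push_cast
    rw [add_mul]
    push_cast at hcval
    linarith
  rw [hsplit, Int.floor_intCast_add]
  have hfloor : (k : ℝ) * al + ε = (⌊(k : ℝ) * al⌋ : ℝ) + (Int.fract ((k : ℝ) * al) + ε) := by
    rw [← add_assoc, Int.floor_add_fract]
  rw [hfloor, Int.floor_intCast_add]
  have hz : ⌊Int.fract ((k : ℝ) * al) + ε⌋ = 0 := by
    rw [Int.floor_eq_zero_iff]
    obtain ⟨hl, hu⟩ := fract_bounds (m + 1) k (by omega) h1 h2
    have hstep : bb ^ (m + 2) = bb ^ m - bb ^ (m + 1) := bb_pow_step m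
    constructor
    · -- 0 ≤ fract + ε
      rcases Nat.even_or_odd m with hn | hn
      · -- m even ⇒ m+1 odd ⇒ ε = -bb^(m+1); fract ≥ bb^(ee (m+1)) = bb^m
        have hodd : Odd (m + 1) := by rcases hn with ⟨t, ht⟩; exact ⟨t, by omega⟩
        have hεeq : ε = -bb ^ (m + 1) := by rw [hε, hodd.neg_one_pow]; ring
        rw [Nat.even_iff] at hn
        have heA : ee (m + 1) = m := by unfold ee; omega
        rw [heA] at hl
        rw [hεeq]
        nlinarith [bb_pow_pos (m + 2)]
      · have heven : Even (m + 1) := by rcases hn with ⟨t, ht⟩; exact ⟨t + 1, by omega⟩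
        have hεeq : ε = bb ^ (m + 1) := by rw [hε, heven.neg_one_pow]; ring
        rw [hεeq]
        nlinarith [Int.fract_nonneg ((k : ℝ) * al), bb_pow_pos (m + 1)]
    · -- fract + ε < 1
      rcases Nat.even_or_odd m with hn | hn
      · have hodd : Odd (m + 1) := by rcases hn with ⟨t, ht⟩; exact ⟨t, by omega⟩
        have hεeq : ε = -bb ^ (m + 1) := by rw [hε, hodd.neg_one_pow]; ring
        rw [hεeq]
        nlinarith [Int.fract_lt_one ((k : ℝ) * al), bb_pow_pos (m + 1)]
      · have heven : Even (m + 1) := by rcases hn with ⟨t, ht⟩; exact ⟨t + 1, by omega⟩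
        have hεeq : ε = bb ^ (m + 1) := by rw [hε, heven.neg_one_pow]; ring
        rw [Nat.odd_iff] at hn
        have hoA : oo (m + 1) = m := by unfold oo; omega
        rw [hoA] at hu
        rw [hεeq]
        nlinarith [bb_pow_pos (m + 2)]
  rw [hz]
  ring

lemma sw_shift (m : ℕ) (hm : 2 ≤ m) (i : ℕ) (hi : i < Nat.fib m) :
    sw (Nat.fib (m + 1) + i) = sw i := by
  have hfibm : Nat.fib (m + 1) = Nat.fib (m - 1) + Nat.fib m := by
    rw [show m + 1 = (m - 1) + 2 by omega, Nat.fib_add_two]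
    congr 2
    omega
  have hfpos : 0 < Nat.fib (m - 1) := Nat.fib_pos.2 (by omega)
  have h1 : i + 1 ≤ Nat.fib (m + 1) := by omega
  have h2 : i + 2 ≤ Nat.fib (m + 1) := by omega
  unfold sw
  rw [show Nat.fib (m + 1) + i + 2 = Nat.fib (m + 1) + (i + 2) by omega,
    show Nat.fib (m + 1) + i + 1 = Nat.fib (m + 1) + (i + 1) by omega,
    S_shift m hm (i + 2) (by omega) h2, S_shift m hm (i + 1) (by omega) h1]
  rw [decide_eq_decide]
  omega

lemma S1 : S 1 = 0 := by
  unfold S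
  rw [Int.floor_eq_zero_iff]
  constructor
  · push_cast; nlinarith [al_pos]
  · push_cast; nlinarith [al_lt_one]

lemma S2 : S 2 = 0 := by
  unfold S
  rw [Int.floor_eq_zero_iff]
  unfold al
  constructor
  · push_cast; nlinarith [sq5_ub]
  · push_cast; nlinarith [sq5_lb]

lemma S3 : S 3 = 1 := by
  unfold S
  rw [Int.floor_eq_iff]
  unfold al
  constructor
  · push_cast; nlinarith [sq5_ub, sq5_sq]
  · push_cast; nlinarith [sq5_lb, sq5_sq]

lemma sw0 : sw 0 = false := by
  unfold sw
  norm_num [S1, S2]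

lemma sw1 : sw 1 = true := by
  unfold sw
  norm_num [S2, S3]

lemma fibWord_eq : ∀ n, 2 ≤ n → fibWord n = (List.range (Nat.fib n)).map sw := by
  intro n
  induction n using Nat.strong_induction_on with
  | _ n ih =>
  intro hn
  rcases Nat.lt_or_ge n 4 with h4 | h4
  · have hc : n = 2 ∨ n = 3 := by omega
    rcases hc with rfl | rfl
    · have hf : Nat.fib 2 = 1 := by decide
      rw [hf, show List.range 1 = [0] by decide]
      simp [fibWord, sw0]
    · have hf : Nat.fib 3 = 2 := by decide
      rw [hf]
      have : List.range 2 = [0, 1] := by decide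
      rw [this]
      simp [fibWord, sw0, sw1]
  · obtain ⟨p, rfl⟩ : ∃ p, n = p + 4 := ⟨n - 4, by omega⟩
    have hrec : fibWord (p + 4) = fibWord (p + 3) ++ fibWord (p + 2) := rfl
    rw [hrec, ih (p + 3) (by omega) (by omega), ih (p + 2) (by omega) (by omega)]
    have hfib : Nat.fib (p + 4) = Nat.fib (p + 2) + Nat.fib (p + 3) := Nat.fib_add_two
    have hsplit : List.range (Nat.fib (p + 4)) =
        List.range (Nat.fib (p + 3)) ++ List.range' (Nat.fib (p + 3)) (Nat.fib (p + 2)) 1 := by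
      have e2 := List.range'_append (s := 0) (m := Nat.fib (p + 3)) (n := Nat.fib (p + 2)) (step := 1)
      simp only [one_mul, zero_add] at e2
      rw [List.range_eq_range', List.range_eq_range', hfib, Nat.add_comm, ← e2]
    rw [hsplit, List.map_append]
    congr 1
    have hmap : List.range' (Nat.fib (p + 3)) (Nat.fib (p + 2)) 1 =
        (List.range (Nat.fib (p + 2))).map (fun i => Nat.fib (p + 3) + i) := by
      rw [List.range'_eq_map_range]
    rw [hmap, List.map_map]
    apply List.map_congr_left
    intro i hi
    simp only [Function.comp_apply]
    have hss := sw_shift (p + 2) (by omega) i (List.mem_range.1 hi)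
    rw [show p + 2 + 1 = p + 3 by omega] at hss
    exact hss.symm

lemma infix_eq_map_range' {u : List Bool} {N : ℕ}
    (h : u <:+: (List.range N).map sw) :
    ∃ a, a + u.length ≤ N ∧ u = (List.range' a u.length).map sw := by
  obtain ⟨p, t, hpt⟩ := h
  rw [List.append_assoc] at hpt
  have hlen : p.length + (u.length + t.length) = N := by
    have := congrArg List.length hpt
    simpa [List.length_append] using this
  refine ⟨p.length, by omega, ?_⟩
  have e1 := List.range'_append (s := p.length) (m := u.length) (n := t.length) (step := 1)
  have e2 := List.range'_append (s := 0) (m := p.length) (n := u.length + t.length) (step := 1)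
  simp only [one_mul, zero_add] at e1 e2
  have hsplit1 : List.range' 0 N 1 = List.range' 0 p.length 1 ++
      (List.range' p.length u.length 1 ++ List.range' (p.length + u.length) t.length 1) := by
    rw [e1, e2]
    congr 1
    omega
  have hmain : p ++ (u ++ t) = (List.range' 0 p.length 1).map sw ++
      ((List.range' p.length u.length 1).map sw ++ (List.range' (p.length + u.length) t.length 1).map sw) := by
    rw [← List.map_append, ← List.map_append, ← hsplit1, ← List.range_eq_range']
    exact hpt
  have h1 := List.append_inj hmain (by simp)
  have h2 := List.append_inj h1.2 (by simp [List.length_range'])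
  exact h2.1

lemma count_bounds {u : List Bool} {N : ℕ} (h : u <:+: (List.range N).map sw) :
    ⌊(u.length : ℝ) * al⌋ ≤ (u.count true : ℤ) ∧
      (u.count true : ℤ) ≤ ⌊(u.length : ℝ) * al⌋ + 1 := by
  obtain ⟨a, _, hu⟩ := infix_eq_map_range' h
  have hcw := count_window a u.length
  rw [← hu] at hcw
  have hwb := window_bounds (a + 1) u.length
  rw [show a + 1 + u.length = a + u.length + 1 by omega] at hwb
  omega

end FibAux

/-- Every Fibonacci word is balanced. -/
theorem fibWord_balanced : ∀ n : ℕ, 1 ≤ n → IsBalanced (fibWord n) := by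
  intro n hn
  unfold IsBalanced
  intro u v hu hv hlen
  rcases eq_or_lt_of_le hn with h1 | h2
  · -- n = 1
    subst h1
    have hlu : u.length ≤ 1 := by
      have := hu.length_le
      simpa [fibWord] using this
    have hlv : v.length ≤ 1 := by
      have := hv.length_le
      simpa [fibWord] using this
    have hcu : u.count true ≤ 1 := le_trans (List.count_le_length (a := _) (l := _)) hlu
    have hcv : v.count true ≤ 1 := le_trans (List.count_le_length (a := _) (l := _)) hlv
    rw [abs_le]
    omega
  · -- n ≥ 2
    rw [FibAux.fibWord_eq n h2] at hu hv
    have hb1 := FibAux.count_bounds hu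
    have hb2 := FibAux.count_bounds hv
    rw [hlen] at hb1
    rw [abs_le]
    omega
end

section
/- For coprime positive integers 0 < h < p, the binary word of length p whose i-th letter is ⌊ih/p⌋ − ⌊(i−1)h/p⌋ (for 1 ≤ i ≤ p) is a Lyndon word with respect to the order 0 < 1. -/
private lemma lex_aux : ∀ (i : ℕ) (x y : List ℕ), ∀ (_ : i < x.length) (_ : i < y.length),
    (∀ t, ∀ (h1 : t < x.length) (h2 : t < y.length), t < i → x[t] = y[t]) →
    x[i] < y[i] → List.Lex (· < ·) x y := by
  intro i
  induction i with
  | zero =>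
    intro x y hx hy _ hlt
    cases x with
    | nil => simp at hx
    | cons a x' =>
      cases y with
      | nil => simp at hy
      | cons b y' => exact List.Lex.rel (by simpa using hlt)
  | succ n ih =>
    intro x y hx hy heq hlt
    cases x with
    | nil => simp at hx
    | cons a x' =>
      cases y with
      | nil => simp at hy
      | cons b y' =>
        have hab : a = b := heq 0 (by simp) (by simp) (by omega)
        subst hab
        exact List.Lex.cons (ih x' y' (by simpa using hx) (by simpa using hy)
          (fun t h1 h2 htn => by
            have := heq (t+1) (by simpa using h1) (by simpa using h2) (by omega)
            simpa using this)
          (by simpa using hlt))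

/-- For coprime `0 < h < p`, the word of length `p` whose `i`-th letter is
`⌊ih/p⌋ − ⌊(i−1)h/p⌋` (the lower Christoffel word of slope `h/p`) is Lyndon. -/
theorem christoffel_lyndon (h p : ℕ) (h0 : 0 < h) (hp : h < p)
    (hco : Nat.Coprime h p) :
    ∀ s : List ℕ, s <:+ ((List.range p).map fun k => (k + 1) * h / p - k * h / p) →
      s ≠ [] → s ≠ ((List.range p).map fun k => (k + 1) * h / p - k * h / p) →
      List.Lex (· < ·) ((List.range p).map fun k => (k + 1) * h / p - k * h / p) s := by
  intro s hsuf hne hnew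
  set w := (List.range p).map (fun k => (k + 1) * h / p - k * h / p) with hw
  have hp0 : 0 < p := by omega
  set A : ℕ → ℕ := fun n => n * h / p with hA
  -- basic facts about A
  have hAmono : ∀ {a b : ℕ}, a ≤ b → A a ≤ A b := fun hab =>
    Nat.div_le_div_right (Nat.mul_le_mul_right _ hab)
  have hsup : ∀ a b : ℕ, A a + A b ≤ A (a + b) ∧ A (a + b) ≤ A a + A b + 1 := by
    intro a b
    have h1 : (a + b) * h = a * h + b * h := by ring
    have h2 : (a * h + b * h) / p = a * h / p + b * h / p
        + if p ≤ a * h % p + b * h % p then 1 else 0 := Nat.add_div hp0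
    simp only [hA, h1, h2]
    split <;> omega
  have hAp : A p = h := by
    simp only [hA]
    exact Nat.mul_div_cancel_left h hp0 ▸ (by rw [Nat.mul_comm, Nat.mul_div_cancel _ hp0])
  -- get j
  obtain ⟨t, ht⟩ := hsuf
  set j := t.length with hj
  have hwlen : w.length = p := by simp [hw]
  have hlen : j + s.length = p := by
    have := congrArg List.length ht
    rw [hwlen] at this
    simpa [hj] using this
  have hj0 : 0 < j := by
    rcases Nat.eq_zero_or_pos j with h' | h'
    · exfalso; apply hnew
      have : t = [] := List.length_eq_zero_iff.mp h'
      rw [this] at ht; simpa using ht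
    · exact h'
  have hjp : j < p := by
    have : 0 < s.length := List.length_pos_iff.mpr hne
    omega
  -- key coprimality fact: A p ≠ A j + A (p - j)
  have hndvd : ∀ k : ℕ, 0 < k → k < p → k * h % p ≠ 0 := by
    intro k hk0 hkp hmod
    have hdvd : p ∣ k * h := Nat.dvd_of_mod_eq_zero hmod
    have : p ∣ k := (Nat.Coprime.dvd_of_dvd_mul_right (hco.symm)) hdvd
    have := Nat.le_of_dvd hk0 this
    omega
  have hPkey : A (j + (p - j)) ≠ A j + A (p - j) := by
    have hje : j + (p - j) = p := by omega
    rw [hje, hAp]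
    intro heq
    -- then remainders sum to 0
    have h1 : j * h + (p - j) * h = p * h := by
      have : j + (p - j) = p := by omega
      calc j * h + (p - j) * h = (j + (p - j)) * h := by ring
        _ = p * h := by rw [this]
    have h2 : (j * h + (p - j) * h) / p = j * h / p + (p - j) * h / p
        + if p ≤ j * h % p + (p - j) * h % p then 1 else 0 := Nat.add_div hp0
    have h3 : (p * h) / p = h := by rw [Nat.mul_comm]; exact Nat.mul_div_cancel _ hp0
    have h4 : j * h % p ≠ 0 := hndvd j hj0 hjp
    have h5 : (p - j) * h % p ≠ 0 := hndvd (p - j) (by omega) (by omega)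
    -- (r1 + r2) % p = 0
    have h6 : (j * h % p + (p - j) * h % p) % p = 0 := by
      rw [← Nat.add_mod, h1, Nat.mul_mod_right]
    have h7 : j * h % p < p := Nat.mod_lt _ hp0
    have h8 : (p - j) * h % p < p := Nat.mod_lt _ hp0
    rw [h1, h3] at h2
    simp only [hA] at heq
    -- from heq : h = j*h/p + (p-j)*h/p, and h2: the if must be 0
    rcases Nat.lt_or_ge (j * h % p + (p - j) * h % p) p with hc | hc
    · rw [Nat.mod_eq_of_lt hc] at h6; omega
    · rw [if_pos hc] at h2; omega
  -- minimal counterexample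
  have hPex : ∃ n, A (j + n) ≠ A j + A n := ⟨p - j, hPkey⟩
  classical
  set m := Nat.find hPex with hm
  have hPm : A (j + m) ≠ A j + A m := Nat.find_spec hPex
  have hmin : ∀ n < m, A (j + n) = A j + A n := fun n hn => by
    have := Nat.find_min hPex hn
    simpa using this
  have hm0 : 0 < m := by
    rcases Nat.eq_zero_or_pos m with h' | h'
    · exfalso; apply hPm; rw [h']; simp [hA]
    · exact h'
  have hmle : m ≤ p - j := Nat.find_le hPkey
  set i := m - 1 with hi
  have him : i + 1 = m := by omega
  -- w k formula
  have hget : ∀ k (hk : k < w.length), w[k] = A (k + 1) - A k := by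
    intro k hk
    simp [hw, hA]
  have hgets : ∀ k (hk : k < s.length), s[k] = A (j + k + 1) - A (j + k) := by
    intro k hk
    have hjk : j + k < w.length := by omega
    have hjk' : j + k < (t ++ s).length := by rw [ht]; exact hjk
    have e0 : w[j + k] = (t ++ s)[j + k] := List.getElem_of_eq ht.symm hjk
    have e1 : (t ++ s)[j + k]'hjk' = s[(j + k) - t.length]'(by omega) :=
      List.getElem_append_right (by omega)
    have e2 : (j + k) - t.length = k := by omega
    rw [← e0, hget _ hjk] at e1
    simp only [e2] at e1
    exact e1.symm
  have hilen : i < s.length := by omega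
  have hilw : i < w.length := by omega
  apply lex_aux i w s hilw hilen
  · intro n h1 h2 hni
    rw [hget n h1, hgets n h2]
    have e1 : A (j + n) = A j + A n := hmin n (by omega)
    have e2 : A (j + n + 1) = A j + A (n + 1) := by
      have h' := hmin (n + 1) (by omega)
      have hr : j + (n + 1) = j + n + 1 := by omega
      rwa [hr] at h'
    have := hAmono (show n ≤ n + 1 by omega)
    omega
  · rw [hget i hilw, hgets i hilen]
    have e1 : A (j + i) = A j + A i := hmin i (by omega)
    have e2 : A j + A (i + 1) ≤ A (j + i + 1) := by
      have := (hsup j (i + 1)).1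
      have hr : j + (i + 1) = j + i + 1 := by omega
      rwa [hr] at this
    have e3 : A (j + i + 1) ≤ A j + A (i + 1) + 1 := by
      have := (hsup j (i + 1)).2
      have hr : j + (i + 1) = j + i + 1 := by omega
      rwa [hr] at this
    have e4 : A (j + i + 1) ≠ A j + A (i + 1) := by
      have := hPm
      rw [← him] at this
      have hr : j + (i + 1) = j + i + 1 := by omega
      rwa [hr] at this
    have := hAmono (show i ≤ i + 1 by omega)
    have him' : A (i + 1) = A m := by rw [him]
    omega
end
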